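/- arXiv:2406.10014 — 6 statements merged into one kernel-verified Lean document; each statement's English description precedes it below -/
import Mathlib

section
/- Let $k > 1$ and $0 \le \delta < 1$ be real numbers. There exists a constant $C_k > 0$ (depending only on $k$) such that for all real numbers $x, y$ with $1 \le y \le x$, the number of integers $n$ with $x < n \le x + y$ such that $n$ is $k$-powered and the largest prime factor of $n/\kappa(n)$ is at most $y^{1-\delta}$ is at most $C_k \left( y^{(3k+1)/(4k)} + \frac{y^{1-\delta}}{\log(y+1)} \right)$. -/
open scoped Classical

/-- The squarefree kernel `κ(n)`: the product of the distinct primes dividing `n`. -/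
def kappa (n : ℕ) : ℕ := ∏ p ∈ n.primeFactors, p

/-- A positive integer `n` is `k`-powered if `κ(n)^k ≤ n`. -/
noncomputable def IsKPowered (k : ℝ) (n : ℕ) : Prop := (kappa n : ℝ) ^ k ≤ (n : ℝ)

set_option maxHeartbeats 1000000



private lemma sum_inv_sq_le' (m : ℕ) (hm : 1 ≤ m) :
    ∀ n, m ≤ n → ∑ d ∈ Finset.Icc m n, (1:ℝ)/(d:ℝ)^2 ≤ 2/(m:ℝ) - 1/(n:ℝ) := by
  have hm0 : (0:ℝ) < m := by exact_mod_cast hm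
  have hm1 : (1:ℝ) ≤ m := by exact_mod_cast hm
  refine Nat.le_induction ?_ ?_
  · rw [Finset.Icc_self, Finset.sum_singleton]
    rw [div_sub_div _ _ (ne_of_gt hm0) (ne_of_gt hm0)]
    rw [div_le_div_iff₀ (by positivity) (by positivity)]
    nlinarith [hm0, hm1]
  · intro n hn ih
    have hn0 : (0:ℝ) < n := by
      have : (0:ℕ) < n := lt_of_lt_of_le hm hn
      exact_mod_cast this
    rw [Finset.sum_Icc_succ_top (Nat.le_succ_of_le hn)]
    push_cast
    have key : (1:ℝ)/((n:ℝ)+1)^2 ≤ 1/(n:ℝ) - 1/((n:ℝ)+1) := by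
      rw [div_sub_div _ _ (ne_of_gt hn0) (by positivity)]
      rw [div_le_div_iff₀ (by positivity) (by positivity)]
      nlinarith [hn0]
    linarith

private lemma sum_inv_sq_le (m n : ℕ) (hm : 1 ≤ m) :
    ∑ d ∈ Finset.Icc m n, (1:ℝ)/(d:ℝ)^2 ≤ 2/(m:ℝ) := by
  have hm0 : (0:ℝ) < m := by exact_mod_cast hm
  rcases le_or_gt m n with h | h
  · have hn0 : (0:ℝ) < n := by
      have : (0:ℕ) < n := lt_of_lt_of_le hm h
      exact_mod_cast this
    have h1 : (0:ℝ) < 1/(n:ℝ) := by positivity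
    linarith [sum_inv_sq_le' m hm n h]
  · rw [Finset.Icc_eq_empty_of_lt h, Finset.sum_empty]
    positivity



private lemma kappa_pos (n : ℕ) : 0 < kappa n :=
  Finset.prod_pos (fun p hp => (Nat.prime_of_mem_primeFactors hp).pos)

private lemma kappa_dvd (n : ℕ) : kappa n ∣ n := Nat.prod_primeFactors_dvd n

private lemma key_decomp (n : ℕ) (hn : 2 ≤ n) :
    ∃ a : ℕ, 0 < a ∧ a^2 ∣ n ∧ n ∣ a^2 * kappa n ∧
      (∀ p : ℕ, p.Prime → p ∣ a → p^2 ∣ n ∧ p ∣ n / kappa n) := by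
  classical
  have hn0 : n ≠ 0 := by omega
  set v : ℕ → ℕ := fun p => n.factorization p with hv
  set a : ℕ := ∏ p ∈ n.primeFactors, p ^ (v p / 2) with ha
  have hfact : ∏ p ∈ n.primeFactors, p ^ v p = n := by
    have := Nat.factorization_prod_pow_eq_self hn0
    rw [Finsupp.prod] at this
    simpa [Nat.support_factorization] using this
  have ha2 : a ^ 2 = ∏ p ∈ n.primeFactors, p ^ (v p / 2 * 2) := by
    rw [ha, ← Finset.prod_pow]
    exact Finset.prod_congr rfl (fun p _ => by rw [← pow_mul])
  have hadvd : a ^ 2 ∣ n := by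
    have h : ∏ p ∈ n.primeFactors, p ^ (v p / 2 * 2) ∣ ∏ p ∈ n.primeFactors, p ^ v p :=
      Finset.prod_dvd_prod_of_dvd _ _
        (fun p _ => pow_dvd_pow p (Nat.div_mul_le_self (v p) 2))
    rw [hfact] at h
    rw [ha2]; exact h
  have hpos : 0 < a := by
    rw [ha]
    exact Finset.prod_pos (fun p hp => pow_pos (Nat.prime_of_mem_primeFactors hp).pos _)
  refine ⟨a, hpos, hadvd, ?_, ?_⟩
  · have : a ^ 2 * kappa n = ∏ p ∈ n.primeFactors, p ^ (v p / 2 * 2 + 1) := by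
      rw [ha2, kappa, ← Finset.prod_mul_distrib]
      exact Finset.prod_congr rfl (fun p _ => by rw [pow_succ])
    have h : ∏ p ∈ n.primeFactors, p ^ v p ∣ ∏ p ∈ n.primeFactors, p ^ (v p / 2 * 2 + 1) :=
      Finset.prod_dvd_prod_of_dvd _ _
        (fun p _ => pow_dvd_pow p (by omega))
    rw [hfact] at h
    rw [this]; exact h
  · intro p hp hpa
    rw [ha] at hpa
    obtain ⟨q, hq, hpq⟩ := hp.prime.exists_mem_finset_dvd hpa
    have hq' : q.Prime := Nat.prime_of_mem_primeFactors hq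
    have hvq : 1 ≤ v q / 2 := by
      rcases Nat.eq_zero_or_pos (v q / 2) with h | h
      · rw [h, pow_zero, Nat.dvd_one] at hpq
        exact absurd hpq hp.one_lt.ne'
      · exact h
    have hpq' : p = q := by
      have : p ∣ q := hp.dvd_of_dvd_pow hpq
      exact (Nat.prime_dvd_prime_iff_eq hp hq').mp this
    subst hpq'
    have hvp2 : 2 ≤ v p := by omega
    have hp2 : p ^ 2 ∣ n := (Nat.Prime.pow_dvd_iff_le_factorization hp hn0).mpr hvp2
    refine ⟨hp2, ?_⟩
    rw [Nat.dvd_div_iff_mul_dvd (kappa_dvd n)]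
    set R : ℕ := ∏ q ∈ n.primeFactors.erase p, q with hR
    have hkap : kappa n = p * R := (Finset.mul_prod_erase _ _ hq).symm
    have hRdvd : R ∣ n := by
      have h1 : R ∣ kappa n := by
        rw [hkap]; exact Dvd.intro_left p rfl
      exact h1.trans (kappa_dvd n)
    have hcop : Nat.Coprime (p ^ 2) R := by
      apply Nat.Coprime.pow_left
      apply Nat.Coprime.prod_right
      intro r hr
      have hr' : r.Prime := Nat.prime_of_mem_primeFactors (Finset.mem_of_mem_erase hr)
      have hne : p ≠ r := (Finset.ne_of_mem_erase hr).symm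
      exact (Nat.coprime_primes hp hr').mpr hne
    have : p ^ 2 * R ∣ n := hcop.mul_dvd_of_dvd_of_dvd hp2 hRdvd
    calc kappa n * p = p ^ 2 * R := by rw [hkap]; ring
      _ ∣ n := this


private lemma card_multiples_le (N M m : ℕ) (hm : 0 < m) (hNM : N ≤ M) :
    (((Finset.Ioc N M).filter (fun n => m ∣ n)).card : ℝ) ≤ ((M:ℝ) - N)/m + 1 := by
  have hm0 : (0:ℝ) < m := by exact_mod_cast hm
  have hcard : ((Finset.Ioc N M).filter (fun n => m ∣ n)).card
      ≤ (Finset.Ioc (N/m) (M/m)).card := by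
    apply Finset.card_le_card_of_injOn (fun n => n / m)
    · intro n hn
      simp only [Finset.coe_filter, Set.mem_setOf_eq, Finset.mem_filter, Finset.mem_Ioc, Finset.coe_Ioc, Set.mem_Ioc, Finset.mem_coe] at hn ⊢
      exact ⟨Nat.div_lt_div_of_lt_of_dvd hn.2 hn.1.1, Nat.div_le_div_right hn.1.2⟩
    · intro n1 h1 n2 h2 h
      simp only [Finset.coe_filter, Set.mem_setOf_eq, Finset.mem_Ioc] at h1 h2
      have e1 : n1 / m * m = n1 := Nat.div_mul_cancel h1.2
      have e2 : n2 / m * m = n2 := Nat.div_mul_cancel h2.2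
      simp only at h
      rw [← e1, ← e2, h]
  rw [Nat.card_Ioc] at hcard
  have hdiv : N / m ≤ M / m := Nat.div_le_div_right hNM
  have h1 : ((M/m : ℕ) : ℝ) ≤ (M:ℝ)/m := Nat.cast_div_le
  have h2 : (N:ℝ)/m - 1 < ((N/m : ℕ) : ℝ) := by
    rw [div_sub_one (ne_of_gt hm0), div_lt_iff₀ hm0]
    have hmod := Nat.div_add_mod N m
    have hlt : N % m < m := Nat.mod_lt _ hm
    have : (m:ℝ) * (N/m : ℕ) + (N % m : ℕ) = (N:ℝ) := by exact_mod_cast hmod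
    push_cast at this ⊢
    nlinarith [this, (by exact_mod_cast hlt : ((N % m : ℕ):ℝ) < m)]
  have hc : ((M / m - N / m : ℕ) : ℝ) = ((M/m : ℕ) : ℝ) - ((N/m : ℕ) : ℝ) :=
    Nat.cast_sub hdiv
  calc (((Finset.Ioc N M).filter (fun n => m ∣ n)).card : ℝ)
      ≤ ((M / m - N / m : ℕ) : ℝ) := by exact_mod_cast hcard
    _ = ((M/m : ℕ) : ℝ) - ((N/m : ℕ) : ℝ) := hc
    _ ≤ (M:ℝ)/m - ((N:ℝ)/m - 1) := by linarith
    _ = ((M:ℝ) - N)/m + 1 := by ring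

private lemma exists_divisor_in_window (a : ℕ) (ha : a ≠ 0) (D Q : ℝ)
    (hD : 1 ≤ D) (hQ1 : 1 < Q) (haD : D ≤ (a:ℝ))
    (hsm : ∀ q : ℕ, q.Prime → q ∣ a → (q:ℝ) < Q) :
    ∃ d : ℕ, d ∣ a ∧ D ≤ (d:ℝ) ∧ (d:ℝ) < Q * D := by
  classical
  set S := a.divisors.filter (fun d : ℕ => D ≤ (d:ℝ)) with hS
  have hne : S.Nonempty := ⟨a, by simp [hS, Nat.mem_divisors, ha, haD]⟩
  set d := S.min' hne with hd
  have hdS : d ∈ S := Finset.min'_mem _ _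
  rw [hS, Finset.mem_filter, Nat.mem_divisors] at hdS
  obtain ⟨⟨hdvd, -⟩, hDd⟩ := hdS
  refine ⟨d, hdvd, hDd, ?_⟩
  by_contra hcon
  push_neg at hcon
  have hd1 : (1:ℝ) < (d:ℝ) := lt_of_lt_of_le (by nlinarith) hcon
  have hd2 : 2 ≤ d := by exact_mod_cast hd1
  have hq : (d.minFac).Prime := Nat.minFac_prime (by omega)
  have hqd : d.minFac ∣ d := Nat.minFac_dvd d
  have hqa : d.minFac ∣ a := hqd.trans hdvd
  have hqQ : ((d.minFac : ℕ) : ℝ) < Q := hsm _ hq hqa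
  have hq0 : 0 < d.minFac := hq.pos
  have hq0' : (0:ℝ) < (d.minFac : ℝ) := by exact_mod_cast hq0
  set e := d / d.minFac with he
  have hed : e ∣ a := (Nat.div_dvd_of_dvd hqd).trans hdvd
  have hecast : (e:ℝ) = (d:ℝ)/(d.minFac : ℝ) := by
    rw [he]
    exact_mod_cast Nat.cast_div hqd (ne_of_gt hq0')
  have heD : D ≤ (e:ℝ) := by
    rw [hecast, le_div_iff₀ hq0']
    nlinarith
  have heS : e ∈ S := by
    simp only [hS, Finset.mem_filter, Nat.mem_divisors]
    exact ⟨⟨hed, ha⟩, heD⟩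
  have hmin : d ≤ e := Finset.min'_le _ _ heS
  have hlt : e < d := Nat.div_lt_self (by omega) hq.one_lt
  omega

private lemma card_primes_le (z : ℝ) (hz : 1 < z) (n : ℕ) :
    (((Finset.range (n+1)).filter (fun p => Nat.Prime p ∧ z ≤ (p:ℝ))).card : ℝ) * Real.log z
      ≤ (n:ℝ) * Real.log 4 := by
  classical
  set T := (Finset.range (n+1)).filter (fun p => Nat.Prime p ∧ z ≤ (p:ℝ)) with hT
  have hz0 : (0:ℝ) < z := by linarith
  have h1 : z ^ T.card ≤ ((∏ p ∈ T, p : ℕ) : ℝ) := by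
    rw [Nat.cast_prod, ← Finset.prod_const]
    exact Finset.prod_le_prod (fun _ _ => hz0.le) (fun p hp => (Finset.mem_filter.mp hp).2.2)
  have h2 : (∏ p ∈ T, p) ≤ primorial n := by
    apply Finset.prod_le_prod_of_subset_of_one_le'
    · intro p hp
      simp only [hT, Finset.mem_filter] at hp ⊢
      exact ⟨hp.1, hp.2.1⟩
    · intro i hi _
      exact (Finset.mem_filter.mp hi).2.one_lt.le
  have h3 : ((primorial n : ℕ) : ℝ) ≤ (4:ℝ) ^ n := by
    exact_mod_cast primorial_le_4_pow n
  have h4 : z ^ T.card ≤ (4:ℝ) ^ n := by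
    calc z ^ T.card ≤ ((∏ p ∈ T, p : ℕ) : ℝ) := h1
      _ ≤ ((primorial n : ℕ) : ℝ) := by exact_mod_cast h2
      _ ≤ (4:ℝ) ^ n := h3
  have h5 : Real.log (z ^ T.card) ≤ Real.log ((4:ℝ) ^ n) :=
    Real.log_le_log (by positivity) h4
  rwa [Real.log_pow, Real.log_pow] at h5


theorem stmt0 (k δ : ℝ) (hk : 1 < k) (hδ0 : 0 ≤ δ) (hδ1 : δ < 1) :
    ∃ C : ℝ, 0 < C ∧ ∀ x y : ℝ, 1 ≤ y → y ≤ x →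
      (((Finset.Ioc ⌊x⌋₊ ⌊x + y⌋₊).filter (fun n =>
          IsKPowered k n ∧
          ∀ p : ℕ, p.Prime → p ∣ n / kappa n → (p : ℝ) ≤ y ^ (1 - δ))).card : ℝ)
        ≤ C * (y ^ ((3 * k + 1) / (4 * k)) + y ^ (1 - δ) / Real.log (y + 1)) := by
  have hk0 : (0:ℝ) < k := by linarith
  have hk1 : (0:ℝ) < k - 1 := by linarith
  have hlog4 : (0:ℝ) < Real.log 4 := Real.log_pos (by norm_num)
  set κe : ℝ := (k-1)/(4*k) with hκe
  have hκ0 : 0 < κe := by positivity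
  have hκ3 : 3*κe ≤ 1 := by
    rw [hκe, show (3:ℝ)*((k-1)/(4*k)) = (3*(k-1))/(4*k) by ring,
      div_le_iff₀ (by positivity)]
    nlinarith
  set θ : ℝ := (3*k+1)/(4*k) with hθdef
  have hθeq : θ = 1 - κe := by
    rw [hθdef, hκe]
    field_simp
    ring
  have hθ0 : 0 < θ := by positivity
  set Ck : ℝ := 8*k*Real.log 4/(k-1) with hCk
  have hCk0 : 0 < Ck := by positivity
  refine ⟨15 + Ck, by positivity, ?_⟩
  intro x y hy hxy
  have hx : (1:ℝ) ≤ x := le_trans hy hxy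
  have hy0 : (0:ℝ) < y := by linarith
  set N := ⌊x⌋₊ with hN
  set M := ⌊x + y⌋₊ with hM
  set S := (Finset.Ioc N M).filter (fun n =>
      IsKPowered k n ∧
      ∀ p : ℕ, p.Prime → p ∣ n / kappa n → (p : ℝ) ≤ y ^ (1 - δ)) with hS
  have hNM : N ≤ M := Nat.floor_mono (by linarith)
  have hMle : (M:ℝ) ≤ x + y := Nat.floor_le (by linarith)
  have hNgt : x - 1 < (N:ℝ) := by
    have := Nat.lt_floor_add_one x
    linarith
  have hMN : (M:ℝ) - (N:ℝ) ≤ 2*y := by linarith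
  have hyθ : (1:ℝ) ≤ y ^ θ := Real.one_le_rpow hy hθ0.le
  have hlogy1 : (0:ℝ) < Real.log (y+1) := Real.log_pos (by linarith)
  have hsec : (0:ℝ) ≤ y^(1-δ)/Real.log (y+1) := by positivity
  have hcardIoc : (S.card : ℝ) ≤ (M:ℝ) - (N:ℝ) := by
    have h1 : S.card ≤ (Finset.Ioc N M).card := Finset.card_filter_le _ _
    rw [Nat.card_Ioc] at h1
    have h2 : ((M - N : ℕ) : ℝ) = (M:ℝ) - (N:ℝ) := Nat.cast_sub hNM
    calc (S.card : ℝ) ≤ ((M - N : ℕ) : ℝ) := by exact_mod_cast h1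
      _ = (M:ℝ) - (N:ℝ) := h2
  rcases lt_or_ge y 2 with hy2 | hy2
  · -- trivial case: y < 2
    have h1 : (S.card : ℝ) ≤ 4 := by linarith
    nlinarith [hyθ, hsec, hCk0]
  · -- main case: 2 ≤ y
    have hlogy : (0:ℝ) < Real.log y := Real.log_pos (by linarith)
    set p₀ : ℝ := y ^ κe with hp₀
    have hp₀1 : (1:ℝ) < p₀ := by
      rw [hp₀]
      exact Real.one_lt_rpow_iff_of_pos hy0 |>.mpr (Or.inl ⟨by linarith, hκ0⟩)
    have hp₀0 : (0:ℝ) < p₀ := by linarith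
    set P : ℝ := y ^ (1-δ) with hP
    have hP0 : (0:ℝ) < P := by
      rw [hP]; positivity
    set m₁ := ⌈p₀⌉₊ with hm₁
    have hm₁1 : 1 ≤ m₁ := Nat.one_le_ceil_iff.mpr hp₀0
    have hm₁p : p₀ ≤ (m₁:ℝ) := Nat.le_ceil _
    have hm₁0 : (0:ℝ) < (m₁:ℝ) := by exact_mod_cast hm₁1
    set M₁ := ⌊p₀ * p₀⌋₊ with hM₁
    set MP := ⌊P⌋₊ with hMP
    set E₁ := (Finset.Icc 1 M₁).filter (fun d : ℕ => p₀ ≤ (d:ℝ)) with hE₁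
    set E₂ := (Finset.range (MP+1)).filter (fun p : ℕ => Nat.Prime p ∧ p₀ ≤ (p:ℝ)) with hE₂
    set f : ℕ → Finset ℕ := fun d => (Finset.Ioc N M).filter (fun n => d^2 ∣ n) with hf
    -- covering
    have hcover : S ⊆ E₁.biUnion f ∪ E₂.biUnion f := by
      intro n hn
      rw [hS, Finset.mem_filter] at hn
      obtain ⟨hnI, hpow, hsmooth⟩ := hn
      rw [Finset.mem_Ioc] at hnI
      have hN1 : 1 ≤ N := Nat.le_floor (by exact_mod_cast hx)
      have hn2 : 2 ≤ n := by omega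
      have hxn : x < (n:ℝ) := by
        have h1 : (N:ℝ) + 1 ≤ (n:ℝ) := by exact_mod_cast hnI.1
        have := Nat.lt_floor_add_one x
        linarith
      have hyn : y ≤ (n:ℝ) := by linarith
      have hn0R : (0:ℝ) < (n:ℝ) := by linarith
      obtain ⟨a, hapos, ha2n, hna2κ, hkey⟩ := key_decomp n hn2
      have ha0R : (0:ℝ) ≤ (a:ℝ) := by positivity
      have hκpos : (0:ℝ) < (kappa n : ℝ) := by exact_mod_cast kappa_pos n
      have hκle : (kappa n : ℝ) ≤ (n:ℝ) ^ (1/k) := by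
        have h1 : ((kappa n : ℝ) ^ k) ^ (1/k) ≤ ((n:ℝ)) ^ (1/k) :=
          Real.rpow_le_rpow (by positivity) hpow (by positivity)
        rwa [← Real.rpow_mul hκpos.le, mul_one_div, div_self hk0.ne', Real.rpow_one] at h1
      have hna : (n:ℝ) ≤ (a:ℝ)^2 * (kappa n : ℝ) := by
        have := Nat.le_of_dvd (Nat.mul_pos (pow_pos hapos 2) (kappa_pos n)) hna2κ
        exact_mod_cast this
      have h3 : (n:ℝ) ^ ((k-1)/k) ≤ (a:ℝ)^2 := by
        have hnk : (0:ℝ) < (n:ℝ)^(1/k) := Real.rpow_pos_of_pos hn0R _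
        rw [show (k-1)/k = 1 - 1/k by rw [sub_div, div_self hk0.ne'], Real.rpow_sub hn0R,
          Real.rpow_one, div_le_iff₀ hnk]
        calc (n:ℝ) ≤ (a:ℝ)^2 * (kappa n : ℝ) := hna
          _ ≤ (a:ℝ)^2 * (n:ℝ)^(1/k) := by nlinarith [hκle, sq_nonneg (a:ℝ)]
      have h4 : (y:ℝ)^((k-1)/k) ≤ (n:ℝ)^((k-1)/k) :=
        Real.rpow_le_rpow hy0.le hyn (by positivity)
      have h5 : ((y:ℝ)^(2*κe))^2 = y^((k-1)/k) := by
        rw [sq, ← Real.rpow_add hy0]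
        congr 1
        rw [hκe]
        field_simp
        ring
      have h6 : (y:ℝ)^(2*κe) ≤ (a:ℝ) := by
        apply le_of_pow_le_pow_left₀ two_ne_zero ha0R
        rw [h5]
        exact le_trans h4 h3
      have hpa : p₀ ≤ (a:ℝ) := by
        rw [hp₀]
        exact le_trans (Real.rpow_le_rpow_of_exponent_le (by linarith)
          (by linarith : κe ≤ 2*κe)) h6
      by_cases hcase : ∃ p : ℕ, p.Prime ∧ p ∣ a ∧ p₀ ≤ (p:ℝ)
      · obtain ⟨p, hp, hpdvd, hpp₀⟩ := hcase
        obtain ⟨hp2n, hpκ⟩ := hkey p hp hpdvd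
        have hpP : (p:ℝ) ≤ P := hsmooth p hp hpκ
        apply Finset.mem_union_right
        rw [Finset.mem_biUnion]
        refine ⟨p, ?_, ?_⟩
        · rw [hE₂, Finset.mem_filter, Finset.mem_range]
          exact ⟨Nat.lt_succ_of_le (Nat.le_floor hpP), hp, hpp₀⟩
        · simp only [hf, Finset.mem_filter, Finset.mem_Ioc]
          exact ⟨hnI, hp2n⟩
      · push_neg at hcase
        obtain ⟨d, hda, hdp₀, hdlt⟩ :=
          exists_divisor_in_window a hapos.ne' p₀ p₀ hp₀1.le hp₀1 hpa hcase
        have hd2n : d^2 ∣ n := (pow_dvd_pow_of_dvd hda 2).trans ha2n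
        apply Finset.mem_union_left
        rw [Finset.mem_biUnion]
        refine ⟨d, ?_, ?_⟩
        · rw [hE₁, Finset.mem_filter, Finset.mem_Icc]
          refine ⟨⟨?_, Nat.le_floor hdlt.le⟩, hdp₀⟩
          exact_mod_cast (le_trans hp₀1.le hdp₀ : (1:ℝ) ≤ (d:ℝ))
        · simp only [hf, Finset.mem_filter, Finset.mem_Ioc]
          exact ⟨hnI, hd2n⟩
    -- per-divisor count
    have hfd : ∀ d : ℕ, 1 ≤ d → (((f d).card : ℝ)) ≤ 2*y/(d:ℝ)^2 + 1 := by
      intro d hd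
      have hd0 : (0:ℝ) < (d:ℝ)^2 := by
        have : (0:ℝ) < (d:ℝ) := by exact_mod_cast hd
        positivity
      have h1 := card_multiples_le N M (d^2) (by positivity) hNM
      have h2 : (((d^2:ℕ)):ℝ) = (d:ℝ)^2 := by push_cast; ring
      calc ((f d).card : ℝ) ≤ ((M:ℝ) - N)/(((d^2:ℕ)):ℝ) + 1 := by
            simp only [hf]; exact_mod_cast h1
        _ = ((M:ℝ) - N)/(d:ℝ)^2 + 1 := by rw [h2]
        _ ≤ 2*y/(d:ℝ)^2 + 1 := by gcongr
    -- sum over E₁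
    have hsum₁ : ∑ d ∈ E₁, ((f d).card : ℝ) ≤ 4*y/p₀ + p₀*p₀ := by
      have hsub : E₁ ⊆ Finset.Icc m₁ M₁ := by
        intro d hd
        rw [hE₁, Finset.mem_filter, Finset.mem_Icc] at hd
        rw [Finset.mem_Icc]
        exact ⟨Nat.ceil_le.mpr hd.2, hd.1.2⟩
      calc ∑ d ∈ E₁, ((f d).card : ℝ) ≤ ∑ d ∈ E₁, (2*y/(d:ℝ)^2 + 1) := by
            apply Finset.sum_le_sum
            intro d hd
            rw [hE₁, Finset.mem_filter, Finset.mem_Icc] at hd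
            exact hfd d hd.1.1
        _ ≤ ∑ d ∈ Finset.Icc m₁ M₁, (2*y/(d:ℝ)^2 + 1) := by
            apply Finset.sum_le_sum_of_subset_of_nonneg hsub
            intro d _ _
            positivity
        _ = 2*y * (∑ d ∈ Finset.Icc m₁ M₁, 1/(d:ℝ)^2) + (Finset.Icc m₁ M₁).card := by
            rw [Finset.sum_add_distrib, Finset.mul_sum, Finset.sum_const, nsmul_eq_mul,
              mul_one]
            congr 1
            exact Finset.sum_congr rfl (fun d _ => by ring)
        _ ≤ 2*y * (2/(m₁:ℝ)) + (M₁:ℝ) := by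
            have h1 := sum_inv_sq_le m₁ M₁ hm₁1
            have h2 : ((Finset.Icc m₁ M₁).card : ℝ) ≤ (M₁:ℝ) := by
              rw [Nat.card_Icc]
              have : M₁ + 1 - m₁ ≤ M₁ := by omega
              exact_mod_cast this
            have hmul : 2*y * (∑ d ∈ Finset.Icc m₁ M₁, 1/(d:ℝ)^2) ≤ 2*y * (2/(m₁:ℝ)) :=
              mul_le_mul_of_nonneg_left h1 (by linarith)
            linarith
        _ ≤ 4*y/p₀ + p₀*p₀ := by
            have h1 : 2*y*(2/(m₁:ℝ)) = 4*y/(m₁:ℝ) := by ring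
            have h2 : 4*y/(m₁:ℝ) ≤ 4*y/p₀ := by gcongr <;> linarith
            have h3 : (M₁:ℝ) ≤ p₀*p₀ := Nat.floor_le (by positivity)
            linarith
    -- sum over E₂
    have hsum₂ : ∑ p ∈ E₂, ((f p).card : ℝ)
        ≤ 4*y/p₀ + P * Real.log 4 / (κe * Real.log y) := by
      have hsub : E₂ ⊆ Finset.Icc m₁ MP := by
        intro p hp
        rw [hE₂, Finset.mem_filter, Finset.mem_range] at hp
        rw [Finset.mem_Icc]
        exact ⟨Nat.ceil_le.mpr hp.2.2, by omega⟩
      have hstep : ∑ p ∈ E₂, ((f p).card : ℝ)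
          ≤ 2*y * (∑ p ∈ E₂, 1/(p:ℝ)^2) + (E₂.card : ℝ) := by
        have hterm : ∀ p ∈ E₂, ((f p).card : ℝ) ≤ 2*y*(1/(p:ℝ)^2) + 1 := by
          intro p hp
          rw [hE₂, Finset.mem_filter] at hp
          have h := hfd p hp.2.1.one_lt.le
          calc ((f p).card : ℝ) ≤ 2*y/(p:ℝ)^2 + 1 := h
            _ = 2*y*(1/(p:ℝ)^2) + 1 := by ring
        calc ∑ p ∈ E₂, ((f p).card : ℝ) ≤ ∑ p ∈ E₂, (2*y*(1/(p:ℝ)^2) + 1) :=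
              Finset.sum_le_sum hterm
          _ = 2*y * (∑ p ∈ E₂, 1/(p:ℝ)^2) + (E₂.card : ℝ) := by
              rw [Finset.sum_add_distrib, Finset.sum_const, nsmul_eq_mul, mul_one,
                Finset.mul_sum]
      have hsq : ∑ p ∈ E₂, 1/(p:ℝ)^2 ≤ 2/(m₁:ℝ) := by
        calc ∑ p ∈ E₂, 1/(p:ℝ)^2 ≤ ∑ d ∈ Finset.Icc m₁ MP, 1/(d:ℝ)^2 := by
              apply Finset.sum_le_sum_of_subset_of_nonneg hsub
              intro d _ _
              positivity
          _ ≤ 2/(m₁:ℝ) := sum_inv_sq_le m₁ MP hm₁1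
      have hcard : (E₂.card : ℝ) ≤ P * Real.log 4 / (κe * Real.log y) := by
        have h1 := card_primes_le p₀ hp₀1 MP
        rw [← hE₂] at h1
        have h2 : Real.log p₀ = κe * Real.log y := by
          rw [hp₀, Real.log_rpow hy0]
        have h3 : ((MP:ℕ):ℝ) ≤ P := Nat.floor_le hP0.le
        have h4 : (E₂.card : ℝ) * (κe * Real.log y) ≤ P * Real.log 4 := by
          rw [← h2]
          calc (E₂.card : ℝ) * Real.log p₀ ≤ (MP:ℝ) * Real.log 4 := h1
            _ ≤ P * Real.log 4 := by nlinarith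
        have hpos : (0:ℝ) < κe * Real.log y := by positivity
        rw [le_div_iff₀ hpos]
        exact h4
      have hmul : 2*y * (∑ p ∈ E₂, 1/(p:ℝ)^2) ≤ 2*y * (2/(m₁:ℝ)) :=
        mul_le_mul_of_nonneg_left hsq (by linarith)
      have h5 : 2*y*(2/(m₁:ℝ)) ≤ 4*y/p₀ := by
        have h1 : 2*y*(2/(m₁:ℝ)) = 4*y/(m₁:ℝ) := by ring
        have h2 : 4*y/(m₁:ℝ) ≤ 4*y/p₀ := by gcongr <;> linarith
        linarith
      linarith
    -- total count
    have htotal : (S.card : ℝ) ≤ 8*y/p₀ + p₀*p₀ + P * Real.log 4 / (κe * Real.log y) := by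
      have h1 : S.card ≤ (E₁.biUnion f ∪ E₂.biUnion f).card := Finset.card_le_card hcover
      have h2 : (E₁.biUnion f ∪ E₂.biUnion f).card
          ≤ (E₁.biUnion f).card + (E₂.biUnion f).card := Finset.card_union_le _ _
      have h3 : (E₁.biUnion f).card ≤ ∑ d ∈ E₁, (f d).card := Finset.card_biUnion_le
      have h4 : (E₂.biUnion f).card ≤ ∑ p ∈ E₂, (f p).card := Finset.card_biUnion_le
      have h5 : (S.card : ℝ) ≤ ∑ d ∈ E₁, ((f d).card : ℝ) + ∑ p ∈ E₂, ((f p).card : ℝ) := by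
        have : S.card ≤ ∑ d ∈ E₁, (f d).card + ∑ p ∈ E₂, (f p).card := by omega
        push_cast
        exact_mod_cast this
      calc (S.card : ℝ) ≤ ∑ d ∈ E₁, ((f d).card : ℝ) + ∑ p ∈ E₂, ((f p).card : ℝ) := h5
        _ ≤ (4*y/p₀ + p₀*p₀) + (4*y/p₀ + P * Real.log 4 / (κe * Real.log y)) :=
            add_le_add hsum₁ hsum₂
        _ = 8*y/p₀ + p₀*p₀ + P * Real.log 4 / (κe * Real.log y) := by ring
    -- final numeric comparison
    have hyp₀ : y/p₀ = y^θ := by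
      rw [hθeq, hp₀, Real.rpow_sub hy0, Real.rpow_one]
    have hpp2 : p₀*p₀ ≤ y^θ := by
      rw [hp₀, ← Real.rpow_add hy0]
      apply Real.rpow_le_rpow_of_exponent_le (by linarith)
      rw [hθeq]
      linarith
    have hlog2 : Real.log (y+1) ≤ 2 * Real.log y := by
      have h1 : Real.log (y+1) ≤ Real.log (y*y) :=
        Real.log_le_log (by linarith) (by nlinarith)
      rw [Real.log_mul (by linarith) (by linarith)] at h1
      linarith
    have hlogterm : P * Real.log 4 / (κe * Real.log y) ≤ Ck * (P/Real.log (y+1)) := by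
      have e1 : P * Real.log 4 / (κe * Real.log y) = (Ck/2) * (P/Real.log y) := by
        rw [hCk, hκe]
        field_simp
        ring
      have e2 : P/Real.log y ≤ 2*(P/Real.log (y+1)) := by
        rw [div_le_iff₀ hlogy]
        have h1 : 2*(P/Real.log (y+1)) * Real.log y
            = (2*Real.log y) * (P / Real.log (y+1)) := by ring
        rw [h1]
        calc P = Real.log (y+1) * (P / Real.log (y+1)) := by field_simp
          _ ≤ (2*Real.log y) * (P / Real.log (y+1)) := by
              apply mul_le_mul_of_nonneg_right hlog2
              positivity
      calc P * Real.log 4 / (κe * Real.log y) = (Ck/2) * (P/Real.log y) := e1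
        _ ≤ (Ck/2) * (2*(P/Real.log (y+1))) :=
            mul_le_mul_of_nonneg_left e2 (by linarith)
        _ = Ck * (P/Real.log (y+1)) := by ring
    have hfin : (S.card : ℝ) ≤ 9 * y^θ + Ck * (P/Real.log (y+1)) := by
      have h8 : 8*y/p₀ = 8*(y/p₀) := by ring
      rw [h8, hyp₀] at htotal
      linarith
    have hPsec : (0:ℝ) ≤ P/Real.log (y+1) := by positivity
    nlinarith [hyθ, hPsec, hCk0, hfin]
end

section
/- There exists an absolute constant $C > 0$ such that the following holds. Let $\alpha > 1/2$ be a real number, let $y \ge 3$ and $x \ge 0$ be real numbers, and let $w$ be a real number with $2 \le w \le y^{1/8}$. Then the number of integers $n$ with $x < n \le x + y$ such that $n$ has a divisor $d$ with $d > y^{\alpha}$ and $d$ being $w$-smooth is at most $C \, y \left( \exp\left(-\frac{\log y}{2 \log w}\right) + y^{-1/6} \right)$. -/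
open scoped Classical
open Finset


lemma theta_le (n : ℕ) :
    ∑ p ∈ (Finset.range (n+1)).filter Nat.Prime, Real.log p ≤ n * Real.log 4 := by
  have h1 : ∀ p ∈ (Finset.range (n+1)).filter Nat.Prime, (0:ℝ) < p := by
    intro p hp
    simp only [Finset.mem_filter] at hp
    exact_mod_cast hp.2.pos
  have h2 : Real.log (primorial n) = ∑ p ∈ (Finset.range (n+1)).filter Nat.Prime, Real.log p := by
    rw [primorial]
    push_cast [Nat.cast_prod]
    exact Real.log_prod (fun p hp => ne_of_gt (h1 p hp))
  rw [← h2]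
  calc Real.log (primorial n) ≤ Real.log ((4:ℕ)^n) := by
        apply Real.log_le_log (by exact_mod_cast (primorial_pos n))
        exact_mod_cast primorial_le_4_pow n
    _ = n * Real.log 4 := by push_cast; rw [Real.log_pow]

noncomputable def mert (N : ℕ) : ℝ := ∑ p ∈ (Finset.range N).filter Nat.Prime, Real.log p / p

lemma mert_nonneg (N : ℕ) : 0 ≤ mert N := by
  apply Finset.sum_nonneg
  intro p hp
  simp only [Finset.mem_filter] at hp
  have : (1:ℝ) ≤ p := by exact_mod_cast hp.2.one_lt.le
  positivity

lemma mert_mono {M N : ℕ} (h : M ≤ N) : mert M ≤ mert N := by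
  apply Finset.sum_le_sum_of_subset_of_nonneg
  · exact Finset.filter_subset_filter _ (Finset.range_subset_range.2 h)
  · intro p hp _
    simp only [Finset.mem_filter] at hp
    have : (1:ℝ) ≤ p := by exact_mod_cast hp.2.one_lt.le
    positivity

lemma mert_pow2 (k : ℕ) : mert (2^k) ≤ k * (2 * Real.log 4) := by
  induction k with
  | zero => simp [mert, Finset.range_one, Finset.filter_singleton, Nat.not_prime_zero]
  | succ k ih =>
      have hsplit : mert (2^(k+1)) = mert (2^k) +
          ∑ p ∈ (Finset.Ico (2^k) (2^(k+1))).filter Nat.Prime, Real.log p / p := by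
        unfold mert
        rw [Finset.sum_filter, Finset.sum_filter, Finset.sum_filter,
          Finset.range_eq_Ico, Finset.range_eq_Ico]
        exact (Finset.sum_Ico_consecutive (M := ℝ) _ (Nat.zero_le _)
          (Nat.pow_le_pow_right (by norm_num : 0 < 2) (Nat.le_succ k))).symm
      have hband : ∑ p ∈ (Finset.Ico (2^k) (2^(k+1))).filter Nat.Prime, Real.log p / p
          ≤ 2 * Real.log 4 := by
        have h1 : ∑ p ∈ (Finset.Ico (2^k) (2^(k+1))).filter Nat.Prime, Real.log p / p
            ≤ ∑ p ∈ (Finset.Ico (2^k) (2^(k+1))).filter Nat.Prime, Real.log p / 2^k := by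
          apply Finset.sum_le_sum
          intro p hp
          simp only [Finset.mem_filter, Finset.mem_Ico] at hp
          have hlp : 0 ≤ Real.log p := Real.log_nonneg (by exact_mod_cast hp.2.one_lt.le)
          have h2k : (0:ℝ) < 2^k := by positivity
          have hpk : (2:ℝ)^k ≤ p := by exact_mod_cast hp.1.1
          exact div_le_div_of_nonneg_left hlp h2k hpk
        have h2 : ∑ p ∈ (Finset.Ico (2^k) (2^(k+1))).filter Nat.Prime, Real.log p
            ≤ (2^(k+1) : ℝ) * Real.log 4 := by
          calc ∑ p ∈ (Finset.Ico (2^k) (2^(k+1))).filter Nat.Prime, Real.log p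
              ≤ ∑ p ∈ (Finset.range (2^(k+1))).filter Nat.Prime, Real.log p := by
                apply Finset.sum_le_sum_of_subset_of_nonneg
                · apply Finset.filter_subset_filter
                  rw [Finset.range_eq_Ico]
                  exact Finset.Ico_subset_Ico (Nat.zero_le _) le_rfl
                · intro p hp _
                  simp only [Finset.mem_filter] at hp
                  exact Real.log_nonneg (by exact_mod_cast hp.2.one_lt.le)
            _ ≤ ((2^(k+1) - 1 : ℕ) : ℝ) * Real.log 4 := by
                have := theta_le (2^(k+1) - 1)
                have hco : 2^(k+1) - 1 + 1 = 2^(k+1) := Nat.succ_pred_eq_of_pos (Nat.two_pow_pos _)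
                rwa [hco] at this
            _ ≤ (2^(k+1) : ℝ) * Real.log 4 := by
                apply mul_le_mul_of_nonneg_right _ (Real.log_nonneg (by norm_num))
                have : ((2^(k+1) - 1 : ℕ) : ℝ) ≤ ((2^(k+1) : ℕ) : ℝ) := by
                  exact_mod_cast Nat.sub_le _ _
                simpa using this
        calc ∑ p ∈ (Finset.Ico (2^k) (2^(k+1))).filter Nat.Prime, Real.log p / p
            ≤ (∑ p ∈ (Finset.Ico (2^k) (2^(k+1))).filter Nat.Prime, Real.log p) / 2^k := by
              rw [Finset.sum_div]; exact h1
          _ ≤ ((2^(k+1):ℝ) * Real.log 4) / 2^k := by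
              have h2k : (0:ℝ) < 2^k := by positivity
              exact (div_le_div_iff_of_pos_right h2k).2 h2
          _ = 2 * Real.log 4 := by
              rw [pow_succ]; field_simp
      push_cast
      calc mert (2^(k+1)) ≤ k * (2*Real.log 4) + 2*Real.log 4 := by
            rw [hsplit]; exact add_le_add ih hband
        _ = (k+1) * (2*Real.log 4) := by ring

lemma mert_le (N : ℕ) (hN : 2 ≤ N) : mert (N+1) ≤ 8 * Real.log N := by
  have hN0 : (N:ℝ) ≥ 2 := by exact_mod_cast hN
  have h1 : mert (N+1) ≤ mert (2^(N.log2 + 1)) := mert_mono Nat.lt_log2_self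
  have h2 := mert_pow2 (N.log2 + 1)
  have hlog2 : (0:ℝ) < Real.log 2 := Real.log_pos (by norm_num)
  have h3 : (N.log2 : ℝ) * Real.log 2 ≤ Real.log N := by
    have := Nat.log2_self_le (by omega : N ≠ 0)
    calc (N.log2 : ℝ) * Real.log 2 = Real.log ((2:ℝ)^(N.log2)) := by
          rw [Real.log_pow]
      _ ≤ Real.log N := Real.log_le_log (by positivity) (by exact_mod_cast this)
  have h4 : Real.log 2 ≤ Real.log N := Real.log_le_log (by norm_num) hN0
  have h5 : Real.log 4 = 2 * Real.log 2 := by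
    rw [show (4:ℝ) = 2^2 by norm_num, Real.log_pow]; push_cast; ring
  calc mert (N+1) ≤ (N.log2 + 1 : ℕ) * (2 * Real.log 4) := le_trans h1 h2
    _ = 4 * ((N.log2:ℝ) * Real.log 2) + 4 * Real.log 2 := by push_cast; rw [h5]; ring
    _ ≤ 4 * Real.log N + 4 * Real.log N := by
        have := mul_le_mul_of_nonneg_left h3 (by norm_num : (0:ℝ) ≤ 4)
        have := mul_le_mul_of_nonneg_left h4 (by norm_num : (0:ℝ) ≤ 4)
        linarith
    _ = 8 * Real.log N := by ring

lemma band_recip (μ : ℝ) (hμ : 1 ≤ μ) :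
    ∑ p ∈ (Finset.range (⌊Real.exp (2*μ)⌋₊ + 1)).filter
        (fun p => Nat.Prime p ∧ μ < Real.log p), (1:ℝ)/p ≤ 16 := by
  set N := ⌊Real.exp (2*μ)⌋₊ with hNdef
  have hμ0 : (0:ℝ) < μ := by linarith
  have hNge : 2 ≤ N := by
    have h1 : (2:ℝ) ≤ Real.exp (2*μ) := by
      calc (2:ℝ) ≤ Real.exp 1 := by
            have := Real.add_one_le_exp 1; linarith
        _ ≤ Real.exp (2*μ) := Real.exp_le_exp.2 (by linarith)
    exact Nat.le_floor (by exact_mod_cast h1)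
  have hlogN : Real.log N ≤ 2*μ := by
    calc Real.log N ≤ Real.log (Real.exp (2*μ)) := by
          apply Real.log_le_log (by positivity)
          exact Nat.floor_le (by positivity)
      _ = 2*μ := Real.log_exp _
  have step1 : ∑ p ∈ (Finset.range (N + 1)).filter
        (fun p => Nat.Prime p ∧ μ < Real.log p), (1:ℝ)/p
      ≤ ∑ p ∈ (Finset.range (N + 1)).filter
        (fun p => Nat.Prime p ∧ μ < Real.log p), (Real.log p / p) / μ := by
    apply Finset.sum_le_sum
    intro p hp
    simp only [Finset.mem_filter] at hp
    have hp0 : (0:ℝ) < p := by exact_mod_cast hp.2.1.pos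
    rw [div_div, div_le_div_iff₀ hp0 (by positivity)]
    nlinarith [hp.2.2]
  have step2 : ∑ p ∈ (Finset.range (N + 1)).filter
        (fun p => Nat.Prime p ∧ μ < Real.log p), (Real.log p / p) / μ
      ≤ mert (N+1) / μ := by
    rw [← Finset.sum_div]
    apply div_le_div_of_nonneg_right _ hμ0.le
    apply Finset.sum_le_sum_of_subset_of_nonneg
    · intro p hp
      simp only [Finset.mem_filter] at hp ⊢
      exact ⟨hp.1, hp.2.1⟩
    · intro p hp _
      simp only [Finset.mem_filter] at hp
      have h1 : (1:ℝ) ≤ p := by exact_mod_cast hp.2.one_lt.le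
      have := Real.log_nonneg h1
      positivity
  have step3 : mert (N+1) / μ ≤ 16 := by
    rw [div_le_iff₀ hμ0]
    calc mert (N+1) ≤ 8 * Real.log N := mert_le N hNge
      _ ≤ 8 * (2*μ) := by linarith
      _ = 16 * μ := by ring
  linarith

lemma geom_tail (t : ℝ) (h0 : 0 ≤ t) (h1 : t ≤ 3/4) (E : Finset ℕ) :
    ∑ e ∈ E, t^e ≤ Real.exp (4*t) := by
  have hsub : E ⊆ Finset.range (E.sup id + 1) := fun e he =>
    Finset.mem_range.2 (Nat.lt_succ_of_le (Finset.le_sup (f := id) he))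
  have h2 : ∑ e ∈ E, t^e ≤ ∑ e ∈ Finset.range (E.sup id + 1), t^e :=
    Finset.sum_le_sum_of_subset_of_nonneg hsub (fun i _ _ => pow_nonneg h0 i)
  have h3 : (∑ e ∈ Finset.range (E.sup id + 1), t^e) * (1 - t) ≤ 1 := by
    have hg := geom_sum_mul t (E.sup id + 1)
    nlinarith [pow_nonneg h0 (E.sup id + 1)]
  have h4 : ∑ e ∈ Finset.range (E.sup id + 1), t^e ≤ 1/(1-t) := by
    rw [le_div_iff₀ (by linarith)]; exact h3
  have h5 : 1/(1-t) ≤ 1 + 4*t := by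
    rw [div_le_iff₀ (by linarith)]; nlinarith
  have h6 := Real.add_one_le_exp (4*t)
  linarith

lemma rankin (r : ℝ) (P : Finset ℕ) (hP : ∀ p ∈ P, Nat.Prime p)
    (ht : ∀ p ∈ P, (p:ℝ)^r ≤ 3/4) :
    ∀ S : Finset ℕ, (∀ b ∈ S, 0 < b ∧ ∀ p : ℕ, p.Prime → p ∣ b → p ∈ P) →
    ∑ b ∈ S, (b:ℝ)^r ≤ Real.exp (4 * ∑ p ∈ P, (p:ℝ)^r) := by
  classical
  induction P using Finset.induction_on with
  | empty =>
      intro S hS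
      have hsub : S ⊆ {1} := by
        intro b hb
        obtain ⟨hb0, hbp⟩ := hS b hb
        rcases eq_or_ne b 1 with h | h
        · simp [h]
        · obtain ⟨p, hp, hpd⟩ := Nat.exists_prime_and_dvd h
          exact absurd (hbp p hp hpd) (Finset.notMem_empty p)
      calc ∑ b ∈ S, (b:ℝ)^r ≤ ∑ b ∈ ({1} : Finset ℕ), (b:ℝ)^r := by
            apply Finset.sum_le_sum_of_subset_of_nonneg hsub
            intro b _ _
            exact Real.rpow_nonneg (Nat.cast_nonneg b) r
        _ = 1 := by simp
        _ = Real.exp (4 * ∑ p ∈ (∅ : Finset ℕ), (p:ℝ)^r) := by simp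
  | @insert q P' hq ih =>
      intro S hS
      have hqP : Nat.Prime q := hP q (Finset.mem_insert_self q P')
      have hP' : ∀ p ∈ P', Nat.Prime p := fun p hp => hP p (Finset.mem_insert_of_mem hp)
      have ht' : ∀ p ∈ P', (p:ℝ)^r ≤ 3/4 := fun p hp => ht p (Finset.mem_insert_of_mem hp)
      set t : ℝ := (q:ℝ)^r with htdef
      have ht0 : 0 ≤ t := Real.rpow_nonneg (Nat.cast_nonneg q) r
      have ht34 : t ≤ 3/4 := ht q (Finset.mem_insert_self q P')
      -- fiberwise decomposition
      have hfib : ∑ b ∈ S, (b:ℝ)^r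
          = ∑ e ∈ S.image (fun b => b.factorization q), ∑ b ∈ S.filter (fun b => b.factorization q = e), (b:ℝ)^r := by
        exact (Finset.sum_fiberwise_of_maps_to
          (fun b hb => Finset.mem_image_of_mem (fun b => b.factorization q) hb) _).symm
      have hinner : ∀ e ∈ S.image (fun b => b.factorization q),
          ∑ b ∈ S.filter (fun b => b.factorization q = e), (b:ℝ)^r
            ≤ t^e * Real.exp (4 * ∑ p ∈ P', (p:ℝ)^r) := by
        intro e he
        set F := S.filter (fun b => b.factorization q = e) with hF
        have hFmem : ∀ b ∈ F, b ∈ S ∧ b.factorization q = e := by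
          intro b hb; simpa [hF] using (Finset.mem_filter.1 hb)
        have hdvd : ∀ b ∈ F, q^e ∣ b := by
          intro b hb
          obtain ⟨hbS, hbe⟩ := hFmem b hb
          have := Nat.ordProj_dvd b q
          rwa [hbe] at this
        have hinj : ∀ b₁ ∈ F, ∀ b₂ ∈ F, b₁ / q^e = b₂ / q^e → b₁ = b₂ := by
          intro b₁ h₁ b₂ h₂ heq
          have e₁ := Nat.div_mul_cancel (hdvd b₁ h₁)
          have e₂ := Nat.div_mul_cancel (hdvd b₂ h₂)
          rw [← e₁, ← e₂, heq]
        set S' := F.image (fun b => b / q^e) with hS'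
        have hS'cond : ∀ b' ∈ S', 0 < b' ∧ ∀ p : ℕ, p.Prime → p ∣ b' → p ∈ P' := by
          intro b' hb'
          obtain ⟨b, hbF, rfl⟩ := Finset.mem_image.1 hb'
          obtain ⟨hbS, hbe⟩ := hFmem b hbF
          have hb0 : 0 < b := (hS b hbS).1
          constructor
          · apply Nat.div_pos (Nat.le_of_dvd hb0 (hdvd b hbF)) (pow_pos hqP.pos e)
          · intro p hp hpd
            have hpb : p ∣ b := hpd.trans (Nat.div_dvd_of_dvd (hdvd b hbF))
            have hpP : p ∈ insert q P' := (hS b hbS).2 p hp hpb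
            have hpq : p ≠ q := by
              intro h
              subst h
              have : ¬ p ∣ b / p ^ b.factorization p := Nat.not_dvd_ordCompl hp hb0.ne'
              rw [hbe] at this
              exact this hpd
            exact Finset.mem_insert.1 hpP |>.resolve_left hpq
        have hsplit : ∀ b ∈ F, (b:ℝ)^r = t^e * ((b / q^e : ℕ) : ℝ)^r := by
          intro b hb
          have hb' : b = q^e * (b / q^e) := (Nat.mul_div_cancel' (hdvd b hb)).symm
          have hcast : (b:ℝ) = ((q:ℝ)^e) * ((b / q^e : ℕ) : ℝ) := by
            conv_lhs => rw [hb']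
            push_cast
            ring
          rw [hcast, Real.mul_rpow (by positivity) (Nat.cast_nonneg _)]
          congr 1
          rw [← Real.rpow_natCast (q:ℝ) e, ← Real.rpow_mul (Nat.cast_nonneg q),
            mul_comm, Real.rpow_mul (Nat.cast_nonneg q), Real.rpow_natCast]
        calc ∑ b ∈ F, (b:ℝ)^r = ∑ b ∈ F, t^e * ((b / q^e : ℕ) : ℝ)^r :=
              Finset.sum_congr rfl hsplit
          _ = t^e * ∑ b' ∈ S', (b':ℝ)^r := by
              rw [Finset.mul_sum, hS', Finset.sum_image hinj]
          _ ≤ t^e * Real.exp (4 * ∑ p ∈ P', (p:ℝ)^r) := by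
              apply mul_le_mul_of_nonneg_left (ih hP' ht' S' hS'cond) (pow_nonneg ht0 e)
      calc ∑ b ∈ S, (b:ℝ)^r
          ≤ ∑ e ∈ S.image (fun b => b.factorization q), t^e * Real.exp (4 * ∑ p ∈ P', (p:ℝ)^r) := by
            rw [hfib]; exact Finset.sum_le_sum hinner
        _ = (∑ e ∈ S.image (fun b => b.factorization q), t^e) * Real.exp (4 * ∑ p ∈ P', (p:ℝ)^r) := by
            rw [Finset.sum_mul]
        _ ≤ Real.exp (4*t) * Real.exp (4 * ∑ p ∈ P', (p:ℝ)^r) := by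
            apply mul_le_mul_of_nonneg_right (geom_tail t ht0 ht34 _) (Real.exp_nonneg _)
        _ = Real.exp (4 * ∑ p ∈ insert q P', (p:ℝ)^r) := by
            rw [← Real.exp_add, Finset.sum_insert hq, htdef]
            ring_nf

lemma strip (v T : ℝ) (hT : 1 ≤ T) (hv : 1 ≤ v) :
    ∀ D : ℕ, 0 < D → (∀ p : ℕ, p.Prime → p ∣ D → (p:ℝ) ≤ v) → T < D →
    ∃ b : ℕ, b ∣ D ∧ T < (b:ℝ) ∧ (b:ℝ) ≤ T * v := by
  intro D
  induction D using Nat.strong_induction_on with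
  | _ D ih =>
    intro hD0 hprime hTD
    by_cases hle : (D:ℝ) ≤ T * v
    · exact ⟨D, dvd_rfl, hTD, hle⟩
    · push_neg at hle
      have hD1 : D ≠ 1 := by
        intro h; rw [h] at hle; push_cast at hle; nlinarith
      obtain ⟨p, hp, hpd⟩ := Nat.exists_prime_and_dvd hD1
      have hpv : (p:ℝ) ≤ v := hprime p hp hpd
      have hp0 : (0:ℝ) < p := by exact_mod_cast hp.pos
      have hD'dvd : D / p ∣ D := Nat.div_dvd_of_dvd hpd
      have hD'pos : 0 < D / p := Nat.div_pos (Nat.le_of_dvd hD0 hpd) hp.pos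
      have hcast : ((D / p : ℕ):ℝ) = (D:ℝ)/(p:ℝ) := by
        rw [Nat.cast_div hpd (ne_of_gt hp0)]
      have hTD' : T < ((D / p : ℕ):ℝ) := by
        rw [hcast]
        rw [lt_div_iff₀ hp0]
        calc T * (p:ℝ) ≤ T * v := by
              apply mul_le_mul_of_nonneg_left hpv (by linarith)
          _ < D := hle
      have hlt : D / p < D := Nat.div_lt_self hD0 hp.one_lt
      obtain ⟨b, hb1, hb2, hb3⟩ := ih (D/p) hlt hD'pos
        (fun p' hp' hpd' => hprime p' hp' (hpd'.trans hD'dvd)) hTD'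
      exact ⟨b, hb1.trans hD'dvd, hb2, hb3⟩

lemma count_mult (a c b : ℕ) (hb : 0 < b) (hac : a ≤ c) :
    (((Finset.Ioc a c).filter (fun n => b ∣ n)).card : ℝ) ≤ ((c:ℝ) - a)/b + 1 := by
  classical
  have hunion : (Finset.Ioc 0 a).filter (fun n => b ∣ n) ∪
      (Finset.Ioc a c).filter (fun n => b ∣ n) = (Finset.Ioc 0 c).filter (fun n => b ∣ n) := by
    rw [← Finset.filter_union, Finset.Ioc_union_Ioc_eq_Ioc (Nat.zero_le a) hac]
  have hdisj : Disjoint ((Finset.Ioc 0 a).filter (fun n => b ∣ n))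
      ((Finset.Ioc a c).filter (fun n => b ∣ n)) := by
    rw [Finset.disjoint_left]
    intro n h1 h2
    simp only [Finset.mem_filter, Finset.mem_Ioc] at h1 h2
    omega
  have hcards : a / b + ((Finset.Ioc a c).filter (fun n => b ∣ n)).card = c / b := by
    rw [← Nat.Ioc_filter_dvd_card_eq_div a b, ← Nat.Ioc_filter_dvd_card_eq_div c b,
      ← hunion, Finset.card_union_of_disjoint hdisj]
  have hcardR : (((Finset.Ioc a c).filter (fun n => b ∣ n)).card : ℝ)
      = ((c/b : ℕ):ℝ) - ((a/b : ℕ):ℝ) := by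
    have h' : ((a/b : ℕ):ℝ) + (((Finset.Ioc a c).filter (fun n => b ∣ n)).card : ℝ)
        = ((c/b : ℕ):ℝ) := by exact_mod_cast hcards
    linarith
  rw [hcardR]
  have hb0 : (0:ℝ) < b := by exact_mod_cast hb
  have h1 : ((c/b : ℕ):ℝ) ≤ (c:ℝ)/b := Nat.cast_div_le
  have h2 : (a:ℝ)/(b:ℝ) - 1 ≤ ((a/b : ℕ):ℝ) := by
    have hmod := Nat.div_add_mod a b
    have hmlt : a % b < b := Nat.mod_lt a hb
    have hcast : (a:ℝ) = (b:ℝ) * ((a/b : ℕ):ℝ) + ((a % b : ℕ):ℝ) := by exact_mod_cast hmod.symm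
    have hmltR : ((a % b : ℕ):ℝ) < b := by exact_mod_cast hmlt
    rw [sub_le_iff_le_add, div_le_iff₀ hb0]
    nlinarith
  have : ((c:ℝ) - a)/b = (c:ℝ)/b - (a:ℝ)/b := by ring
  linarith

set_option maxHeartbeats 2000000 in
theorem stmt3 :
    ∃ C : ℝ, 0 < C ∧ ∀ α x y w : ℝ, 1 / 2 < α → 3 ≤ y → 0 ≤ x →
      2 ≤ w → w ≤ y ^ ((1 : ℝ) / 8) →
      (((Finset.Ioc ⌊x⌋₊ ⌊x + y⌋₊).filter (fun n =>
          ∃ d : ℕ, d ∣ n ∧ y ^ α < (d : ℝ) ∧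
            ∀ p : ℕ, p.Prime → p ∣ d → (p : ℝ) ≤ w)).card : ℝ)
        ≤ C * y * (Real.exp (-(Real.log y) / (2 * Real.log w)) + y ^ (-(1 : ℝ) / 6)) := by
  classical
  refine ⟨6 * Real.exp (4 * (16 * Real.exp 9)) + 3 * Real.exp (4 * Real.exp 21),
    by positivity, ?_⟩
  intro α x y w hα hy hx hw hw8
  -- basic quantities
  have hy0 : (0:ℝ) < y := by linarith
  have hy1 : (1:ℝ) ≤ y := by linarith
  set ℓ : ℝ := Real.log y with hℓdef
  have hℓ0 : 0 < ℓ := Real.log_pos (by linarith)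
  have hw0 : (0:ℝ) < w := by linarith
  set m : ℝ := Real.log w with hmdef
  have hm0 : 0 < m := Real.log_pos (by linarith)
  have hm8 : m ≤ ℓ/8 := by
    have h1 : Real.log w ≤ Real.log (y ^ ((1:ℝ)/8)) := Real.log_le_log hw0 hw8
    rwa [Real.log_rpow hy0, one_div, inv_mul_eq_div] at h1
  have hL8 : 8 ≤ ℓ/m := by
    rw [le_div_iff₀ hm0]; linarith
  -- the band cut index
  have hexJ : ∃ j : ℕ, m / 2^j ≤ 20 := by
    obtain ⟨n, hn⟩ := pow_unbounded_of_one_lt (m/20) (by norm_num : (1:ℝ) < 2)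
    exact ⟨n, by rw [div_le_iff₀ (by positivity)]; nlinarith [pow_pos (by norm_num : (0:ℝ)<2) n]⟩
  set J : ℕ := Nat.find hexJ with hJdef
  have hJ : m / 2^J ≤ 20 := Nat.find_spec hexJ
  have hJ' : ∀ j, j < J → 20 < m / 2^j := by
    intro j hj
    have := Nat.find_min hexJ hj
    linarith [not_le.1 this]
  -- definitions
  set η : ℕ → ℝ := fun j => if j < J then (2/15)*(3/5)^j else 2/3 with hηdef
  set δ : ℕ → ℝ := fun j => if j < J then 9/(m/2^j) else 1/2 with hδdef
  set T : ℕ → ℝ := fun j => Real.exp (η j * ℓ/2) with hTdef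
  set V : ℕ → ℝ := fun j => Real.exp (m/2^j) with hVdef
  set band : ℕ → ℕ → Prop :=
    fun j p => Real.log p ≤ m/2^j ∧ (j < J → m/2^(j+1) < Real.log p) with hbanddef
  set PP : ℕ → Finset ℕ :=
    fun j => (Finset.range (⌊V j⌋₊ + 1)).filter (fun p => p.Prime ∧ band j p) with hPPdef
  set BB : ℕ → Finset ℕ :=
    fun j => (Finset.Ioc 0 ⌊y⌋₊).filter (fun b => T j < (b:ℝ) ∧ (b:ℝ) ≤ T j * V j ∧
      ∀ p : ℕ, p.Prime → p ∣ b → band j p) with hBBdef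
  -- simple facts
  have hη0 : ∀ j, 0 ≤ η j := by
    intro j; rw [hηdef]; dsimp only; split <;> positivity
  have hη1 : ∀ j, η j ≤ 1 := by
    intro j; rw [hηdef]; dsimp only; split
    · have : ((3:ℝ)/5)^j ≤ 1 := pow_le_one₀ (by norm_num) (by norm_num)
      nlinarith
    · norm_num
  have hT1 : ∀ j, 1 ≤ T j := by
    intro j; rw [hTdef]; dsimp only
    rw [show (1:ℝ) = Real.exp 0 by simp]
    apply Real.exp_le_exp.2
    have := hη0 j; positivity
  have hV1 : ∀ j, 1 ≤ V j := by
    intro j; rw [hVdef]; dsimp only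
    rw [show (1:ℝ) = Real.exp 0 by simp]
    apply Real.exp_le_exp.2
    positivity
  have hTVy : ∀ j, T j * V j ≤ y := by
    intro j
    rw [hTdef, hVdef]; dsimp only
    rw [← Real.exp_add]
    have h2j : (1:ℝ) ≤ 2^j := one_le_pow₀ (by norm_num)
    have hmj : m/2^j ≤ ℓ/8 := by
      apply le_trans _ hm8
      apply div_le_self hm0.le h2j
    have hη := hη1 j
    have : η j * ℓ/2 + m/2^j ≤ ℓ/2 + ℓ/8 := by
      have : η j * ℓ ≤ 1 * ℓ := mul_le_mul_of_nonneg_right (hη1 j) hℓ0.le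
      linarith
    calc Real.exp (η j * ℓ/2 + m/2^j) ≤ Real.exp (ℓ/2 + ℓ/8) := Real.exp_le_exp.2 this
      _ ≤ Real.exp ℓ := Real.exp_le_exp.2 (by linarith)
      _ = y := Real.exp_log hy0
  -- name the bad set and covering set
  set A := (Finset.Ioc ⌊x⌋₊ ⌊x+y⌋₊).filter (fun n =>
          ∃ d : ℕ, d ∣ n ∧ y ^ α < (d : ℝ) ∧
            ∀ p : ℕ, p.Prime → p ∣ d → (p : ℝ) ≤ w) with hAdef
  set U := (Finset.range (J+1)).biUnion (fun j => (BB j).biUnion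
      (fun b => (Finset.Ioc ⌊x⌋₊ ⌊x+y⌋₊).filter (fun n => b ∣ n))) with hUdef
  have hAU : A ⊆ U := by
    intro n hn
    rw [hAdef, Finset.mem_filter] at hn
    obtain ⟨hnIoc, d, hdn, hdy, hdsm⟩ := hn
    have hn0 : 0 < n := lt_of_le_of_lt (Nat.zero_le _) (Finset.mem_Ioc.1 hnIoc).1
    have hd0 : 0 < d := Nat.pos_of_dvd_of_pos hdn hn0
    have hdhalf : Real.exp (ℓ/2) < (d:ℝ) := by
      have h1 : y ^ α = Real.exp (ℓ * α) := by rw [Real.rpow_def_of_pos hy0]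
      have h2 : ℓ/2 ≤ ℓ * α := by nlinarith
      calc Real.exp (ℓ/2) ≤ Real.exp (ℓ*α) := Real.exp_le_exp.2 h2
        _ = y ^ α := h1.symm
        _ < d := hdy
    set g : ℕ → ℕ := fun p => Nat.findGreatest (fun j => Real.log p ≤ m/2^j) J with hgdef
    have hgJ : ∀ p, g p ≤ J := fun p => Nat.findGreatest_le J
    have hgband : ∀ p ∈ d.primeFactors, band (g p) p := by
      intro p hp
      have hpp : p.Prime := Nat.prime_of_mem_primeFactors hp
      have hpd : p ∣ d := Nat.dvd_of_mem_primeFactors hp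
      have hpw : (p:ℝ) ≤ w := hdsm p hpp hpd
      have hlogp : Real.log p ≤ m := by
        rw [hmdef]; exact Real.log_le_log (by exact_mod_cast hpp.pos) hpw
      rw [hbanddef]
      refine ⟨?_, ?_⟩
      · exact Nat.findGreatest_spec (P := fun j => Real.log p ≤ m/2^j) (Nat.zero_le J) (by simpa using hlogp)
      · intro hlt
        have hng := Nat.findGreatest_is_greatest (Nat.lt_succ_self (g p)) hlt
        exact lt_of_not_ge (fun hc => hng (by simpa using hc))
    set D : ℕ → ℕ := fun j =>
      ∏ p ∈ d.primeFactors.filter (fun p => g p = j), p ^ d.factorization p with hDdef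
    have hdprod : ∏ j ∈ Finset.range (J+1), D j = d := by
      rw [hDdef]
      rw [Finset.prod_fiberwise_of_maps_to
        (fun p hp => Finset.mem_range.2 (Nat.lt_succ_of_le (hgJ p)))
        (fun p => p ^ d.factorization p)]
      simpa [Finsupp.prod, Nat.support_factorization]
        using Nat.factorization_prod_pow_eq_self hd0.ne'
    have hDpos : ∀ j, 0 < D j := by
      intro j
      rw [hDdef]
      apply Finset.prod_pos
      intro p hp
      have hpp : p.Prime := Nat.prime_of_mem_primeFactors (Finset.mem_filter.1 hp).1
      exact pow_pos hpp.pos _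
    have hDdvd : ∀ j ∈ Finset.range (J+1), D j ∣ d := by
      intro j hj
      rw [← hdprod]
      exact Finset.dvd_prod_of_mem _ hj
    have hDprimes : ∀ j, ∀ p : ℕ, p.Prime → p ∣ D j →
        p ∈ d.primeFactors ∧ g p = j := by
      intro j p hp hpd
      rw [hDdef] at hpd
      obtain ⟨q, hq, hpq⟩ := hp.prime.exists_mem_finset_dvd hpd
      have hqmem := Finset.mem_filter.1 hq
      have hqp : q.Prime := Nat.prime_of_mem_primeFactors hqmem.1
      have : p = q := by
        have := hp.dvd_of_dvd_pow hpq
        exact (Nat.prime_dvd_prime_iff_eq hp hqp).1 this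
      subst this
      exact ⟨hqmem.1, hqmem.2⟩
    -- pigeonhole
    have hsumη : ∑ j ∈ Finset.range (J+1), η j ≤ 1 := by
      rw [Finset.sum_range_succ]
      have hJη : η J = 2/3 := by rw [hηdef]; simp
      have hjη : ∀ j ∈ Finset.range J, η j = (2/15)*(3/5)^j := by
        intro j hj
        rw [hηdef]; simp [Finset.mem_range.1 hj]
      rw [hJη, Finset.sum_congr rfl hjη]
      have hgeo : ∑ j ∈ Finset.range J, ((3:ℝ)/5)^j ≤ 5/2 := by
        have hg := geom_sum_mul ((3:ℝ)/5) J
        have hp35 : (0:ℝ) ≤ (3/5:ℝ)^J := by positivity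
        nlinarith
      rw [← Finset.mul_sum]
      nlinarith
    have hex : ∃ j ∈ Finset.range (J+1), T j < (D j : ℝ) := by
      by_contra hcon
      push_neg at hcon
      have hcast : (d:ℝ) = ∏ j ∈ Finset.range (J+1), ((D j : ℕ):ℝ) := by
        rw [← hdprod]; push_cast; ring
      have hle : (d:ℝ) ≤ ∏ j ∈ Finset.range (J+1), T j := by
        rw [hcast]
        apply Finset.prod_le_prod (fun j _ => by positivity) (fun j hj => hcon j hj)
      have hprodT : ∏ j ∈ Finset.range (J+1), T j
          = Real.exp (∑ j ∈ Finset.range (J+1), η j * ℓ/2) := by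
        rw [hTdef, ← Real.exp_sum]
      have hsum2 : ∑ j ∈ Finset.range (J+1), η j * ℓ/2 ≤ ℓ/2 := by
        have : ∑ j ∈ Finset.range (J+1), η j * ℓ/2
            = (∑ j ∈ Finset.range (J+1), η j) * (ℓ/2) := by
          rw [Finset.sum_mul]
          apply Finset.sum_congr rfl
          intro j _; ring
        rw [this]
        nlinarith
      have : (d:ℝ) ≤ Real.exp (ℓ/2) := by
        rw [hprodT] at hle
        exact le_trans hle (Real.exp_le_exp.2 hsum2)
      linarith
    obtain ⟨j, hjmem, hDbig⟩ := hex
    -- strip down to a moderate divisor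
    have hDprimebound : ∀ p : ℕ, p.Prime → p ∣ D j → (p:ℝ) ≤ V j := by
      intro p hp hpd
      obtain ⟨hpmem, hgp⟩ := hDprimes j p hp hpd
      have hband := hgband p hpmem
      rw [hgp] at hband
      rw [hbanddef] at hband
      have h1 : Real.log p ≤ m/2^j := hband.1
      rw [hVdef]
      calc (p:ℝ) = Real.exp (Real.log p) := (Real.exp_log (by exact_mod_cast hp.pos)).symm
        _ ≤ Real.exp (m/2^j) := Real.exp_le_exp.2 h1
    obtain ⟨b, hbD, hbT, hbTV⟩ := strip (V j) (T j) (hT1 j) (hV1 j) (D j) (hDpos j)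
      hDprimebound hDbig
    have hb0 : 0 < b := by
      by_contra hc
      push_neg at hc
      interval_cases b
      · simp at hbT; linarith [hT1 j]
    have hby : b ≤ ⌊y⌋₊ := Nat.le_floor (le_trans hbTV (hTVy j))
    have hbBB : b ∈ BB j := by
      rw [hBBdef]
      rw [Finset.mem_filter, Finset.mem_Ioc]
      refine ⟨⟨hb0, hby⟩, hbT, hbTV, ?_⟩
      intro p hp hpb
      obtain ⟨hpmem, hgp⟩ := hDprimes j p hp (hpb.trans hbD)
      have := hgband p hpmem
      rwa [hgp] at this
    rw [hUdef]
    rw [Finset.mem_biUnion]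
    refine ⟨j, hjmem, ?_⟩
    rw [Finset.mem_biUnion]
    refine ⟨b, hbBB, ?_⟩
    rw [Finset.mem_filter]
    exact ⟨hnIoc, (hbD.trans (hDdvd j hjmem)).trans hdn⟩
  -- counting
  have hδpos : ∀ j, 0 < δ j := by
    intro j; rw [hδdef]; dsimp only; split
    · next hlt =>
        have := hJ' j hlt
        positivity
    · norm_num
  have hnat : A.card ≤ ∑ j ∈ Finset.range (J+1), ∑ b ∈ BB j,
      ((Finset.Ioc ⌊x⌋₊ ⌊x+y⌋₊).filter (fun n => b ∣ n)).card := by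
    refine le_trans (Finset.card_le_card hAU) ?_
    rw [hUdef]
    refine le_trans Finset.card_biUnion_le ?_
    exact Finset.sum_le_sum (fun j _ => Finset.card_biUnion_le)
  have hcount : ∀ j ∈ Finset.range (J+1), ∀ b ∈ BB j,
      (((Finset.Ioc ⌊x⌋₊ ⌊x+y⌋₊).filter (fun n => b ∣ n)).card : ℝ) ≤ 3*y*(1/b) := by
    intro j hj b hb
    rw [hBBdef, Finset.mem_filter, Finset.mem_Ioc] at hb
    obtain ⟨⟨hb0, hby⟩, hbT, hbTV, hbband⟩ := hb
    have hbreal : (b:ℝ) ≤ y := by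
      calc (b:ℝ) ≤ (⌊y⌋₊:ℝ) := by exact_mod_cast hby
        _ ≤ y := Nat.floor_le hy0.le
    have hac : ⌊x⌋₊ ≤ ⌊x+y⌋₊ := Nat.floor_le_floor (by linarith)
    have h1 := count_mult ⌊x⌋₊ ⌊x+y⌋₊ b hb0 hac
    have h2 : ((⌊x+y⌋₊:ℝ) - (⌊x⌋₊:ℝ)) ≤ y + 1 := by
      have hfy := Nat.floor_le (by linarith : (0:ℝ) ≤ x + y)
      have hfx := Nat.lt_floor_add_one x
      linarith
    have hbpos : (0:ℝ) < b := by exact_mod_cast hb0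
    have h3 : ((⌊x+y⌋₊:ℝ) - (⌊x⌋₊:ℝ))/b + 1 ≤ 3*y*(1/b) := by
      rw [show (3:ℝ)*y*(1/b) = 3*y/b by ring, div_add' _ _ _ (ne_of_gt hbpos),
        div_le_div_iff₀ hbpos hbpos]
      nlinarith
    linarith
  -- the Rankin bound for each band
  have hBsum : ∀ j ∈ Finset.range (J+1), ∑ b ∈ BB j, (1:ℝ)/b ≤
      Real.exp (-(δ j * (η j * ℓ/2))) *
        Real.exp (4 * ∑ p ∈ PP j, (p:ℝ)^(δ j - 1)) := by
    intro j hj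
    have hterm : ∀ b ∈ BB j, (1:ℝ)/b ≤
        Real.exp (-(δ j * (η j * ℓ/2))) * (b:ℝ)^(δ j - 1) := by
      intro b hb
      rw [hBBdef, Finset.mem_filter, Finset.mem_Ioc] at hb
      obtain ⟨⟨hb0, _⟩, hbT, _, _⟩ := hb
      have hbpos : (0:ℝ) < b := by exact_mod_cast hb0
      have hTpos : (0:ℝ) < T j := lt_of_lt_of_le one_pos (hT1 j)
      have hsplit : (b:ℝ)^(δ j - 1) = (b:ℝ)^(δ j) / b := by
        rw [Real.rpow_sub hbpos, Real.rpow_one]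
      have hTδ : Real.exp (δ j * (η j * ℓ/2)) ≤ (b:ℝ)^(δ j) := by
        have ha : (T j)^(δ j) ≤ (b:ℝ)^(δ j) :=
          Real.rpow_le_rpow hTpos.le hbT.le (hδpos j).le
        have hb' : (T j)^(δ j) = Real.exp (δ j * (η j * ℓ/2)) := by
          rw [hTdef]; dsimp only
          rw [Real.rpow_def_of_pos (Real.exp_pos _), Real.log_exp, mul_comm]
        rwa [hb'] at ha
      have hQ : 1 ≤ Real.exp (-(δ j * (η j * ℓ/2))) * (b:ℝ)^(δ j) := by
        calc (1:ℝ) = Real.exp (-(δ j * (η j * ℓ/2))) * Real.exp (δ j * (η j * ℓ/2)) := by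
              rw [← Real.exp_add]; simp
          _ ≤ _ := mul_le_mul_of_nonneg_left hTδ (Real.exp_nonneg _)
      calc (1:ℝ)/b ≤ (Real.exp (-(δ j * (η j * ℓ/2))) * (b:ℝ)^(δ j))/b :=
            div_le_div_of_nonneg_right hQ hbpos.le
        _ = Real.exp (-(δ j * (η j * ℓ/2))) * ((b:ℝ)^(δ j)/b) := by ring
        _ = Real.exp (-(δ j * (η j * ℓ/2))) * (b:ℝ)^(δ j - 1) := by rw [hsplit]
    have hPP1 : ∀ p ∈ PP j, p.Prime := by
      intro p hp
      rw [hPPdef] at hp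
      exact (Finset.mem_filter.1 hp).2.1
    have hPP2 : ∀ p ∈ PP j, (p:ℝ)^(δ j - 1) ≤ 3/4 := by
      intro p hp
      rw [hPPdef, Finset.mem_filter] at hp
      obtain ⟨hpr, hpp, hpband⟩ := hp
      have hp0 : (0:ℝ) < p := by exact_mod_cast hpp.pos
      have hp2 : (2:ℝ) ≤ p := by exact_mod_cast hpp.two_le
      by_cases hlt : j < J
      · have hm20 : 20 < m/2^j := hJ' j hlt
        have hδj : δ j = 9/(m/2^j) := by rw [hδdef]; simp [hlt]
        rw [hbanddef] at hpband
        have hup : Real.log p ≤ m/2^j := hpband.1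
        have hlow : m/2^(j+1) < Real.log p := hpband.2 hlt
        have hhalf : m/2^(j+1) = (m/2^j)/2 := by rw [pow_succ]; ring
        have hr2 : 10 < Real.log p := by rw [hhalf] at hlow; linarith
        have hmj : (0:ℝ) < m/2^j := by linarith
        have hr1 : Real.log p / (m/2^j) ≤ 1 := div_le_one_of_le₀ hup hmj.le
        have harg : Real.log p * (δ j - 1) ≤ -1 := by
          rw [hδj]
          have hexpand : Real.log p * (9/(m/2^j) - 1)
              = 9 * (Real.log p / (m/2^j)) - Real.log p := by ring
          rw [hexpand]
          linarith
        have hexp1 : Real.exp (-1) ≤ 3/4 := by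
          rw [show (-1:ℝ) = -(1:ℝ) by norm_num, Real.exp_neg]
          have h2e : (2:ℝ) ≤ Real.exp 1 := by
            have := Real.add_one_le_exp 1; linarith
          rw [inv_le_iff_one_le_mul₀ (by positivity)]
          nlinarith
        calc (p:ℝ)^(δ j - 1) = Real.exp (Real.log p * (δ j - 1)) :=
              Real.rpow_def_of_pos hp0 _
          _ ≤ Real.exp (-1) := Real.exp_le_exp.2 harg
          _ ≤ 3/4 := hexp1
      · have hδj : δ j = 1/2 := by rw [hδdef]; simp [hlt]
        have hu0 : 0 ≤ (p:ℝ)^(δ j - 1) := Real.rpow_nonneg hp0.le _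
        have hsq : (p:ℝ)^(δ j - 1) * (p:ℝ)^(δ j - 1) = ((p:ℝ))⁻¹ := by
          rw [← Real.rpow_add hp0, hδj,
            show (1/2 - 1 : ℝ) + (1/2 - 1) = -1 by norm_num, Real.rpow_neg_one]
        have h12 : ((p:ℝ))⁻¹ ≤ 1/2 := by
          rw [show (1:ℝ)/2 = (2:ℝ)⁻¹ by norm_num]
          exact inv_anti₀ (by norm_num) hp2
        nlinarith
    calc ∑ b ∈ BB j, (1:ℝ)/b
        ≤ ∑ b ∈ BB j, Real.exp (-(δ j * (η j * ℓ/2))) * (b:ℝ)^(δ j - 1) :=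
          Finset.sum_le_sum hterm
      _ = Real.exp (-(δ j * (η j * ℓ/2))) * ∑ b ∈ BB j, (b:ℝ)^(δ j - 1) := by
          rw [Finset.mul_sum]
      _ ≤ Real.exp (-(δ j * (η j * ℓ/2))) *
          Real.exp (4 * ∑ p ∈ PP j, (p:ℝ)^(δ j - 1)) := by
          apply mul_le_mul_of_nonneg_left _ (Real.exp_nonneg _)
          apply rankin (δ j - 1) (PP j) hPP1 hPP2 (BB j)
          intro b hb
          rw [hBBdef, Finset.mem_filter, Finset.mem_Ioc] at hb
          obtain ⟨⟨hb0, _⟩, _, _, hbband⟩ := hb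
          refine ⟨hb0, fun p hp hpb => ?_⟩
          have hband := hbband p hp hpb
          rw [hPPdef, Finset.mem_filter, Finset.mem_range]
          refine ⟨?_, hp, hband⟩
          have h1 : Real.log p ≤ m/2^j := by rw [hbanddef] at hband; exact hband.1
          have hpV : (p:ℝ) ≤ V j := by
            rw [hVdef]
            calc (p:ℝ) = Real.exp (Real.log p) :=
                  (Real.exp_log (by exact_mod_cast hp.pos)).symm
              _ ≤ _ := Real.exp_le_exp.2 h1
          exact Nat.lt_succ_of_le (Nat.le_floor hpV)
  -- prime-sum bounds
  have hPsum_lt : ∀ j, j < J → ∑ p ∈ PP j, (p:ℝ)^(δ j - 1) ≤ 16 * Real.exp 9 := by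
    intro j hlt
    have hm20 : 20 < m/2^j := hJ' j hlt
    have hδj : δ j = 9/(m/2^j) := by rw [hδdef]; simp [hlt]
    have hmj : (0:ℝ) < m/2^j := by linarith
    have hμm : 2*(m/2^(j+1)) = m/2^j := by rw [pow_succ]; ring
    have hμ10 : 10 < m/2^(j+1) := by
      have : m/2^(j+1) = (m/2^j)/2 := by rw [pow_succ]; ring
      rw [this]; linarith
    have hterm : ∀ p ∈ PP j, (p:ℝ)^(δ j - 1) ≤ Real.exp 9 * (1/p) := by
      intro p hp
      rw [hPPdef, Finset.mem_filter] at hp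
      obtain ⟨_, hpp, hpband⟩ := hp
      have hp0 : (0:ℝ) < p := by exact_mod_cast hpp.pos
      rw [hbanddef] at hpband
      have hup : Real.log p ≤ m/2^j := hpband.1
      have hsp : (p:ℝ)^(δ j - 1) = (p:ℝ)^(δ j) * (1/p) := by
        rw [Real.rpow_sub hp0, Real.rpow_one]; ring
      rw [hsp]
      have hpδ : (p:ℝ)^(δ j) ≤ Real.exp 9 := by
        rw [Real.rpow_def_of_pos hp0, hδj]
        apply Real.exp_le_exp.2
        have hr1 : Real.log p / (m/2^j) ≤ 1 := div_le_one_of_le₀ hup hmj.le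
        have hlogp0 : 0 ≤ Real.log p := Real.log_nonneg (by exact_mod_cast hpp.one_lt.le)
        calc Real.log p * (9/(m/2^j)) = 9 * (Real.log p/(m/2^j)) := by ring
          _ ≤ 9 := by linarith
      apply mul_le_mul_of_nonneg_right hpδ (by positivity)
    have hsub : PP j ⊆ (Finset.range (⌊Real.exp (2*(m/2^(j+1)))⌋₊ + 1)).filter
        (fun p => Nat.Prime p ∧ m/2^(j+1) < Real.log p) := by
      intro p hp
      rw [hPPdef, Finset.mem_filter] at hp
      obtain ⟨hpr, hpp, hpband⟩ := hp
      rw [hbanddef] at hpband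
      rw [Finset.mem_filter]
      refine ⟨?_, hpp, hpband.2 hlt⟩
      rw [show Real.exp (2*(m/2^(j+1))) = V j by rw [hVdef]; dsimp only; rw [hμm]]
      exact hpr
    have h16 : ∑ p ∈ PP j, (1:ℝ)/p ≤ 16 := by
      refine le_trans (Finset.sum_le_sum_of_subset_of_nonneg hsub ?_)
        (band_recip (m/2^(j+1)) (by linarith))
      intro p hp _
      positivity
    calc ∑ p ∈ PP j, (p:ℝ)^(δ j - 1) ≤ ∑ p ∈ PP j, Real.exp 9 * (1/p) :=
          Finset.sum_le_sum hterm
      _ = Real.exp 9 * ∑ p ∈ PP j, (1:ℝ)/p := by rw [Finset.mul_sum]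
      _ ≤ Real.exp 9 * 16 := mul_le_mul_of_nonneg_left h16 (Real.exp_nonneg _)
      _ = 16 * Real.exp 9 := by ring
  have hPsum_J : ∑ p ∈ PP J, (p:ℝ)^(δ J - 1) ≤ Real.exp 21 := by
    have hterm : ∀ p ∈ PP J, (p:ℝ)^(δ J - 1) ≤ 1 := by
      intro p hp
      rw [hPPdef, Finset.mem_filter] at hp
      obtain ⟨_, hpp, _⟩ := hp
      apply Real.rpow_le_one_of_one_le_of_nonpos (by exact_mod_cast hpp.one_lt.le)
      have hδJ : δ J = 1/2 := by rw [hδdef]; simp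
      rw [hδJ]; norm_num
    have hcard : ((PP J).card : ℝ) ≤ Real.exp 20 + 1 := by
      have h1 : (PP J).card ≤ ⌊V J⌋₊ + 1 := by
        rw [hPPdef]
        calc ((Finset.range (⌊V J⌋₊+1)).filter _).card
            ≤ (Finset.range (⌊V J⌋₊+1)).card := Finset.card_filter_le _ _
          _ = ⌊V J⌋₊ + 1 := Finset.card_range _
      have h2 : (⌊V J⌋₊:ℝ) ≤ Real.exp 20 := by
        calc (⌊V J⌋₊:ℝ) ≤ V J := Nat.floor_le (by rw [hVdef]; positivity)
          _ ≤ Real.exp 20 := by rw [hVdef]; exact Real.exp_le_exp.2 hJ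
      calc ((PP J).card : ℝ) ≤ ((⌊V J⌋₊ + 1 : ℕ):ℝ) := by exact_mod_cast h1
        _ = (⌊V J⌋₊:ℝ) + 1 := by push_cast; ring
        _ ≤ Real.exp 20 + 1 := by linarith
    have h20 : Real.exp 20 + 1 ≤ Real.exp 21 := by
      have he1 : (2:ℝ) ≤ Real.exp 1 := by have := Real.add_one_le_exp 1; linarith
      have h1e : (1:ℝ) ≤ Real.exp 20 := by
        rw [show (1:ℝ) = Real.exp 0 by simp]; exact Real.exp_le_exp.2 (by norm_num)
      have : Real.exp 21 = Real.exp 20 * Real.exp 1 := by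
        rw [← Real.exp_add]; norm_num
      nlinarith
    calc ∑ p ∈ PP J, (p:ℝ)^(δ J - 1) ≤ ∑ p ∈ PP J, (1:ℝ) := Finset.sum_le_sum hterm
      _ = ((PP J).card : ℝ) := by rw [Finset.sum_const]; simp
      _ ≤ Real.exp 20 + 1 := hcard
      _ ≤ Real.exp 21 := h20
  -- exponential estimates
  have hexp_lt : ∀ j, j < J → Real.exp (-(δ j * (η j * ℓ/2)))
      ≤ Real.exp (-ℓ/(2*m)) * (1/2)^j := by
    intro j hlt
    have hδj : δ j = 9/(m/2^j) := by rw [hδdef]; simp [hlt]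
    have hηj : η j = (2/15)*(3/5)^j := by rw [hηdef]; simp [hlt]
    have h2jpos : (0:ℝ) < 2^j := by positivity
    have hval : δ j * (η j * ℓ/2) = (3/5) * ((6/5)^j * (ℓ/m)) := by
      have h65 : ((6:ℝ)/5)^j = 2^j * (3/5)^j := by rw [← mul_pow]; norm_num
      rw [hδj, hηj, h65]
      field_simp
      ring
    have hbern : 1 + (j:ℝ)*(1/5) ≤ (6/5)^j := by
      have h := one_add_mul_le_pow (by norm_num : (-2:ℝ) ≤ 1/5) j
      calc 1 + (j:ℝ)*(1/5) = 1 + (j:ℝ)*(1/5) := rfl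
        _ ≤ (1 + 1/5)^j := h
        _ = (6/5)^j := by norm_num
    have hL0 : (0:ℝ) < ℓ/m := by positivity
    have hj0 : (0:ℝ) ≤ (j:ℕ) := Nat.cast_nonneg j
    have hineq : ℓ/(2*m) + (24/25)*j ≤ (3/5) * ((6/5)^j * (ℓ/m)) := by
      have h1 : (1 + (j:ℝ)*(1/5)) * (ℓ/m) ≤ (6/5)^j * (ℓ/m) :=
        mul_le_mul_of_nonneg_right hbern hL0.le
      have h2 : 0 ≤ (ℓ/m - 8) * j := mul_nonneg (by linarith [hL8]) hj0
      have h3 : ℓ/(2*m) = (ℓ/m)/2 := by ring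
      nlinarith [hL8]
    calc Real.exp (-(δ j * (η j * ℓ/2)))
        = Real.exp (-((3/5) * ((6/5)^j * (ℓ/m)))) := by rw [hval]
      _ ≤ Real.exp (-(ℓ/(2*m)) - (24/25)*j) := Real.exp_le_exp.2 (by linarith)
      _ = Real.exp (-(ℓ/(2*m))) * Real.exp ((j:ℝ) * (-(24/25))) := by
          rw [← Real.exp_add]; ring_nf
      _ = Real.exp (-(ℓ/(2*m))) * (Real.exp (-(24/25)))^j := by
          rw [Real.exp_nat_mul]
      _ ≤ Real.exp (-(ℓ/(2*m))) * (1/2)^j := by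
          apply mul_le_mul_of_nonneg_left _ (Real.exp_nonneg _)
          apply pow_le_pow_left₀ (Real.exp_nonneg _) _ j
          have hh : Real.exp (24/25) = Real.exp (12/25) * Real.exp (12/25) := by
            rw [← Real.exp_add]; norm_num
          have hb : (37:ℝ)/25 ≤ Real.exp (12/25) := by
            have := Real.add_one_le_exp (12/25:ℝ); linarith
          have h2e : (2:ℝ) ≤ Real.exp (24/25) := by nlinarith
          rw [Real.exp_neg, show (1:ℝ)/2 = (2:ℝ)⁻¹ by norm_num]
          exact inv_anti₀ (by norm_num) h2e
      _ = Real.exp (-ℓ/(2*m)) * (1/2)^j := by rw [neg_div]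
  have hηJ : η J = 2/3 := by rw [hηdef]; simp
  have hδJ : δ J = 1/2 := by rw [hδdef]; simp
  have hyJ : Real.exp (-(δ J * (η J * ℓ/2))) = y ^ (-(1:ℝ)/6) := by
    rw [hδJ, hηJ, Real.rpow_def_of_pos hy0]
    congr 1
    rw [hℓdef]
    ring
  -- assemble
  have hE1 : (0:ℝ) ≤ Real.exp (-ℓ/(2*m)) := Real.exp_nonneg _
  have hE2 : (0:ℝ) ≤ y ^ (-(1:ℝ)/6) := Real.rpow_nonneg hy0.le _
  have hBnn : ∀ j, (0:ℝ) ≤ ∑ b ∈ BB j, (1:ℝ)/b := by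
    intro j
    apply Finset.sum_nonneg
    intro b _
    positivity
  have hstep1 : (A.card : ℝ) ≤ ∑ j ∈ Finset.range (J+1), 3*y*(∑ b ∈ BB j, (1:ℝ)/b) := by
    calc (A.card : ℝ) ≤ ((∑ j ∈ Finset.range (J+1), ∑ b ∈ BB j,
          ((Finset.Ioc ⌊x⌋₊ ⌊x+y⌋₊).filter (fun n => b ∣ n)).card : ℕ) : ℝ) := by
          exact_mod_cast hnat
      _ = ∑ j ∈ Finset.range (J+1), ∑ b ∈ BB j,
          (((Finset.Ioc ⌊x⌋₊ ⌊x+y⌋₊).filter (fun n => b ∣ n)).card : ℝ) := by push_cast; rfl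
      _ ≤ ∑ j ∈ Finset.range (J+1), ∑ b ∈ BB j, 3*y*(1/b) := by
          apply Finset.sum_le_sum
          intro j hj
          exact Finset.sum_le_sum (fun b hb => hcount j hj b hb)
      _ = ∑ j ∈ Finset.range (J+1), 3*y*(∑ b ∈ BB j, (1:ℝ)/b) := by
          apply Finset.sum_congr rfl
          intro j _
          rw [Finset.mul_sum]
  set c1 : ℝ := Real.exp (4*(16*Real.exp 9)) with hc1def
  set c2 : ℝ := Real.exp (4*Real.exp 21) with hc2def
  have hc1pos : 0 < c1 := Real.exp_pos _
  have hc2pos : 0 < c2 := Real.exp_pos _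
  have hstep2 : ∑ j ∈ Finset.range (J+1), 3*y*(∑ b ∈ BB j, (1:ℝ)/b)
      ≤ 6*c1*y*Real.exp (-ℓ/(2*m)) + 3*c2*y*(y ^ (-(1:ℝ)/6)) := by
    rw [Finset.sum_range_succ]
    have hJterm : 3*y*(∑ b ∈ BB J, (1:ℝ)/b) ≤ 3*c2*y*(y ^ (-(1:ℝ)/6)) := by
      have h1 := hBsum J (Finset.self_mem_range_succ J)
      have h2 : Real.exp (4 * ∑ p ∈ PP J, (p:ℝ)^(δ J - 1)) ≤ c2 := by
        rw [hc2def]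
        exact Real.exp_le_exp.2 (by linarith [hPsum_J])
      have h3 : ∑ b ∈ BB J, (1:ℝ)/b ≤ (y ^ (-(1:ℝ)/6)) * c2 := by
        calc ∑ b ∈ BB J, (1:ℝ)/b
            ≤ Real.exp (-(δ J * (η J * ℓ/2))) *
              Real.exp (4 * ∑ p ∈ PP J, (p:ℝ)^(δ J - 1)) := h1
          _ ≤ Real.exp (-(δ J * (η J * ℓ/2))) * c2 :=
              mul_le_mul_of_nonneg_left h2 (Real.exp_nonneg _)
          _ = (y ^ (-(1:ℝ)/6)) * c2 := by rw [hyJ]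
      nlinarith [hy0, hc2pos]
    have hjterm : ∀ j ∈ Finset.range J, 3*y*(∑ b ∈ BB j, (1:ℝ)/b)
        ≤ (3*c1*y*Real.exp (-ℓ/(2*m))) * (1/2)^j := by
      intro j hj
      have hjlt : j < J := Finset.mem_range.1 hj
      have h1 := hBsum j (Finset.mem_range.2 (Nat.lt_succ_of_lt hjlt))
      have h2 : Real.exp (4 * ∑ p ∈ PP j, (p:ℝ)^(δ j - 1)) ≤ c1 := by
        rw [hc1def]
        exact Real.exp_le_exp.2 (by linarith [hPsum_lt j hjlt])
      have h3 : ∑ b ∈ BB j, (1:ℝ)/b ≤ (Real.exp (-ℓ/(2*m)) * (1/2)^j) * c1 := by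
        calc ∑ b ∈ BB j, (1:ℝ)/b
            ≤ Real.exp (-(δ j * (η j * ℓ/2))) *
              Real.exp (4 * ∑ p ∈ PP j, (p:ℝ)^(δ j - 1)) := h1
          _ ≤ Real.exp (-(δ j * (η j * ℓ/2))) * c1 :=
              mul_le_mul_of_nonneg_left h2 (Real.exp_nonneg _)
          _ ≤ (Real.exp (-ℓ/(2*m)) * (1/2)^j) * c1 :=
              mul_le_mul_of_nonneg_right (hexp_lt j hjlt) hc1pos.le
      have h4 : 3*y*(∑ b ∈ BB j, (1:ℝ)/b) ≤ 3*y*((Real.exp (-ℓ/(2*m)) * (1/2)^j) * c1) :=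
        mul_le_mul_of_nonneg_left h3 (by positivity)
      calc 3*y*(∑ b ∈ BB j, (1:ℝ)/b)
          ≤ 3*y*((Real.exp (-ℓ/(2*m)) * (1/2)^j) * c1) := h4
        _ = (3*c1*y*Real.exp (-ℓ/(2*m))) * (1/2)^j := by ring
    have hgeosum : ∑ j ∈ Finset.range J, ((1:ℝ)/2)^j ≤ 2 := by
      have hg := geom_sum_mul ((1:ℝ)/2) J
      have hp : (0:ℝ) ≤ ((1:ℝ)/2)^J := by positivity
      nlinarith
    have hsumlt : ∑ j ∈ Finset.range J, 3*y*(∑ b ∈ BB j, (1:ℝ)/b)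
        ≤ 6*c1*y*Real.exp (-ℓ/(2*m)) := by
      calc ∑ j ∈ Finset.range J, 3*y*(∑ b ∈ BB j, (1:ℝ)/b)
          ≤ ∑ j ∈ Finset.range J, (3*c1*y*Real.exp (-ℓ/(2*m))) * (1/2)^j :=
            Finset.sum_le_sum hjterm
        _ = (3*c1*y*Real.exp (-ℓ/(2*m))) * ∑ j ∈ Finset.range J, ((1:ℝ)/2)^j := by
            rw [Finset.mul_sum]
        _ ≤ (3*c1*y*Real.exp (-ℓ/(2*m))) * 2 := by
            apply mul_le_mul_of_nonneg_left hgeosum (by positivity)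
        _ = 6*c1*y*Real.exp (-ℓ/(2*m)) := by ring
    linarith
  have hgoalform : Real.exp (-(Real.log y) / (2 * Real.log w)) = Real.exp (-ℓ/(2*m)) := by
    rw [hℓdef, hmdef]
  calc (A.card : ℝ)
      ≤ 6*c1*y*Real.exp (-ℓ/(2*m)) + 3*c2*y*(y ^ (-(1:ℝ)/6)) :=
        le_trans hstep1 hstep2
    _ ≤ (6*c1 + 3*c2) * y * (Real.exp (-ℓ/(2*m)) + y ^ (-(1:ℝ)/6)) := by
        nlinarith [mul_nonneg (mul_nonneg hc1pos.le hy0.le) hE2,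
          mul_nonneg (mul_nonneg hc2pos.le hy0.le) hE1]
    _ = (6 * Real.exp (4 * (16 * Real.exp 9)) + 3 * Real.exp (4 * Real.exp 21)) * y *
        (Real.exp (-(Real.log y) / (2 * Real.log w)) + y ^ (-(1:ℝ)/6)) := by
        rw [hgoalform, hc1def, hc2def]
end

section
/- There exists an absolute constant $C > 0$ such that the following holds. Let $z \ge 2$ be a real number, and let $e$ be a function assigning to each prime $p \le z^{1/2}$ an integer $e(p) \ge 2$ such that $p^{e(p)} > z^{1/2}$. Then $\sum_{p \le z^{1/2}} p^{-e(p)} \le C z^{-1/4}$, where the sum is over primes $p \le z^{1/2}$. -/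
open scoped Classical

theorem stmt6 :
    ∃ C : ℝ, 0 < C ∧ ∀ z : ℝ, 2 ≤ z → ∀ e : ℕ → ℕ,
      (∀ p : ℕ, p.Prime → (p : ℝ) ≤ z ^ ((1 : ℝ) / 2) →
        2 ≤ e p ∧ z ^ ((1 : ℝ) / 2) < (p : ℝ) ^ (e p)) →
      ∑ p ∈ (Finset.range (⌊z⌋₊ + 1)).filter
          (fun p : ℕ => p.Prime ∧ (p : ℝ) ≤ z ^ ((1 : ℝ) / 2)),
        ((1 : ℝ) / (p : ℝ) ^ (e p)) ≤ C * z ^ (-(1 : ℝ) / 4) := by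
  refine ⟨4, by norm_num, ?_⟩
  intro z hz e he
  have hz0 : (0 : ℝ) < z := by linarith
  set t : ℝ := z ^ ((1 : ℝ) / 4) with ht
  have ht1 : 1 < t := by
    rw [ht]
    exact (Real.one_lt_rpow_iff_of_pos hz0).2 (Or.inl ⟨by linarith, by norm_num⟩)
  have ht0 : 0 < t := by linarith
  have ht2 : z ^ ((1 : ℝ) / 2) = t ^ 2 := by
    rw [ht, ← Real.rpow_natCast (z ^ ((1:ℝ)/4)) 2, ← Real.rpow_mul hz0.le]
    norm_num
  have hinv : z ^ (-(1 : ℝ) / 4) = 1 / t := by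
    rw [neg_div, Real.rpow_neg hz0.le, ht, one_div]
    norm_num
  rw [hinv]
  set S := (Finset.range (⌊z⌋₊ + 1)).filter
      (fun p : ℕ => p.Prime ∧ (p : ℝ) ≤ z ^ ((1 : ℝ) / 2)) with hS
  rw [← Finset.sum_filter_add_sum_filter_not S (fun p : ℕ => (p : ℝ) ≤ t)]
  have hA : ∑ p ∈ S.filter (fun p : ℕ => (p : ℝ) ≤ t),
      ((1 : ℝ) / (p : ℝ) ^ (e p)) ≤ 2 / t := by
    have hcard : (S.filter (fun p : ℕ => (p : ℝ) ≤ t)).card ≤ ⌊t⌋₊ + 1 := by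
      apply le_trans (Finset.card_le_card (?_ : _ ⊆ Finset.range (⌊t⌋₊ + 1)))
      · simp
      · intro p hp
        simp only [hS, Finset.mem_filter, Finset.mem_range] at hp ⊢
        exact Nat.lt_succ_of_le (Nat.le_floor hp.2)
    have hterm : ∀ p ∈ S.filter (fun p : ℕ => (p : ℝ) ≤ t),
        ((1 : ℝ) / (p : ℝ) ^ (e p)) ≤ 1 / t ^ 2 := by
      intro p hp
      simp only [hS, Finset.mem_filter, Finset.mem_range] at hp
      have h2 := (he p hp.1.2.1 hp.1.2.2).2
      rw [ht2] at h2
      exact one_div_le_one_div_of_le (by positivity) h2.le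
    calc ∑ p ∈ S.filter (fun p : ℕ => (p : ℝ) ≤ t), ((1 : ℝ) / (p : ℝ) ^ (e p))
        ≤ ∑ _p ∈ S.filter (fun p : ℕ => (p : ℝ) ≤ t), (1 / t ^ 2) :=
          Finset.sum_le_sum hterm
      _ = (S.filter (fun p : ℕ => (p : ℝ) ≤ t)).card * (1 / t ^ 2) := by
          rw [Finset.sum_const, nsmul_eq_mul]
      _ ≤ (⌊t⌋₊ + 1 : ℝ) * (1 / t ^ 2) := by
          apply mul_le_mul_of_nonneg_right _ (by positivity)
          exact_mod_cast hcard
      _ ≤ (2 * t) * (1 / t ^ 2) := by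
          apply mul_le_mul_of_nonneg_right _ (by positivity)
          have := Nat.floor_le ht0.le
          linarith
      _ = 2 / t := by field_simp
  have hB : ∑ p ∈ S.filter (fun p : ℕ => ¬ (p : ℝ) ≤ t),
      ((1 : ℝ) / (p : ℝ) ^ (e p)) ≤ 2 / t := by
    have hk0 : ⌊t⌋₊ ≠ 0 := by
      have : 1 ≤ ⌊t⌋₊ := Nat.le_floor (by push_cast; linarith : ((1:ℕ):ℝ) ≤ t)
      omega
    have hsub : S.filter (fun p : ℕ => ¬ (p : ℝ) ≤ t) ⊆
        Finset.Ioc ⌊t⌋₊ (max ⌊t⌋₊ ⌊z⌋₊) := by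
      intro p hp
      simp only [hS, Finset.mem_filter, Finset.mem_range, not_le] at hp
      rw [Finset.mem_Ioc]
      constructor
      · have : (⌊t⌋₊ : ℝ) < p := lt_of_le_of_lt (Nat.floor_le ht0.le) hp.2
        exact_mod_cast this
      · exact le_max_of_le_right (Nat.lt_succ_iff.mp hp.1.1)
    have hterm : ∀ p ∈ S.filter (fun p : ℕ => ¬ (p : ℝ) ≤ t),
        ((1 : ℝ) / (p : ℝ) ^ (e p)) ≤ ((p : ℝ) ^ 2)⁻¹ := by
      intro p hp
      simp only [hS, Finset.mem_filter, Finset.mem_range, not_le] at hp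
      have hp1 : (1 : ℝ) ≤ (p : ℝ) := by
        exact_mod_cast hp.1.2.1.one_lt.le
      rw [one_div]
      apply inv_anti₀ (by positivity)
      exact pow_le_pow_right₀ hp1 (he p hp.1.2.1 hp.1.2.2).1
    calc ∑ p ∈ S.filter (fun p : ℕ => ¬ (p : ℝ) ≤ t), ((1 : ℝ) / (p : ℝ) ^ (e p))
        ≤ ∑ p ∈ S.filter (fun p : ℕ => ¬ (p : ℝ) ≤ t), ((p : ℝ) ^ 2)⁻¹ :=
          Finset.sum_le_sum hterm
      _ ≤ ∑ p ∈ Finset.Ioc ⌊t⌋₊ (max ⌊t⌋₊ ⌊z⌋₊), ((p : ℝ) ^ 2)⁻¹ :=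
          Finset.sum_le_sum_of_subset_of_nonneg hsub (by intros; positivity)
      _ ≤ (⌊t⌋₊ : ℝ)⁻¹ - ((max ⌊t⌋₊ ⌊z⌋₊ : ℕ) : ℝ)⁻¹ :=
          sum_Ioc_inv_sq_le_sub hk0 (le_max_left _ _)
      _ ≤ (⌊t⌋₊ : ℝ)⁻¹ := by
          have : (0:ℝ) ≤ ((max ⌊t⌋₊ ⌊z⌋₊ : ℕ) : ℝ)⁻¹ := by positivity
          linarith
      _ ≤ 2 / t := by
          have h1 : (1 : ℝ) ≤ (⌊t⌋₊ : ℝ) := by exact_mod_cast Nat.le_floor (by push_cast; linarith : ((1:ℕ):ℝ) ≤ t)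
          have h2 : t - 1 ≤ (⌊t⌋₊ : ℝ) := by
            have := Nat.lt_floor_add_one t; linarith
          rw [div_eq_mul_inv]
          rcases le_or_gt t 2 with h | h
          · calc (⌊t⌋₊ : ℝ)⁻¹ ≤ 1 := by
                  rw [inv_le_one_iff₀]; right; exact h1
              _ ≤ 2 * t⁻¹ := by
                  rw [le_mul_inv_iff₀ ht0]; linarith
          · have hf : t / 2 ≤ (⌊t⌋₊ : ℝ) := by linarith
            calc (⌊t⌋₊ : ℝ)⁻¹ ≤ (t / 2)⁻¹ := by
                  apply inv_anti₀ (by positivity) hf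
              _ = 2 * t⁻¹ := by field_simp
  have h4 : 2 / t + 2 / t = 4 * (1 / t) := by ring
  linarith
end

section
/- Let $n'$ and $d'$ be positive integers with $\gcd(n', d') = 1$. Then $D := \gcd\left( n'^3 (n' + 4d'), \; 16 \, d'^3 (n' + d') \right)$ is of the form $2^{e_2} 3^{e_3}$ with integers $0 \le e_2 \le 4$ and $0 \le e_3 \le 1$; in particular, $D$ divides $48$. -/
theorem stmt9 (n' d' : ℕ) (hn : 0 < n') (hd : 0 < d') (h : Nat.gcd n' d' = 1) :
    ∃ e2 e3 : ℕ, e2 ≤ 4 ∧ e3 ≤ 1 ∧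
      Nat.gcd (n' ^ 3 * (n' + 4 * d')) (16 * d' ^ 3 * (n' + d')) = 2 ^ e2 * 3 ^ e3 ∧
      Nat.gcd (n' ^ 3 * (n' + 4 * d')) (16 * d' ^ 3 * (n' + d')) ∣ 48 := by
  set A := n' ^ 3 * (n' + 4 * d') with hA
  set B := 16 * d' ^ 3 * (n' + d') with hB
  have hA0 : A ≠ 0 := by positivity
  have hB0 : B ≠ 0 := by positivity
  have hD0 : Nat.gcd A B ≠ 0 := Nat.gcd_ne_zero_left hA0
  have p2 : Nat.Prime 2 := Nat.prime_two
  have p3 : Nat.Prime 3 := Nat.prime_three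
  have hnd1 : ∀ p : ℕ, p.Prime → p ∣ n' → p ∣ d' → False := by
    intro p hp h1 h2
    have := Nat.dvd_gcd h1 h2
    rw [h] at this
    exact hp.one_lt.ne' (Nat.dvd_one.mp this)
  -- Fact 1 : 2-part
  have f1 : ¬ (2 ∣ A) ∨ ¬ (2 ^ 5 ∣ B) := by
    by_cases h2n : 2 ∣ n'
    · right
      have h2d : ¬ 2 ∣ d' := fun hc => hnd1 2 p2 h2n hc
      intro h32
      have hB' : B = 16 * (d' ^ 3 * (n' + d')) := by rw [hB]; ring
      rw [hB'] at h32
      have h2o : 2 ∣ d' ^ 3 * (n' + d') := by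
        have : (16 : ℕ) * 2 ∣ 16 * (d' ^ 3 * (n' + d')) := by
          simpa using h32
        exact (Nat.mul_dvd_mul_iff_left (by norm_num : (0:ℕ) < 16)).mp this
      rcases (Nat.Prime.dvd_mul p2).mp h2o with hc | hc
      · exact h2d (p2.dvd_of_dvd_pow hc)
      · omega
    · left
      intro h2A
      rcases (Nat.Prime.dvd_mul p2).mp h2A with hc | hc
      · exact h2n (p2.dvd_of_dvd_pow hc)
      · omega
  -- Fact 2 : 3-part
  have f2 : ¬ (3 ^ 2 ∣ A) ∨ ¬ (3 ^ 2 ∣ B) := by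
    by_contra hc
    push_neg at hc
    obtain ⟨h9A, h9B⟩ := hc
    by_cases h3n : 3 ∣ n'
    · have h3d : ¬ 3 ∣ d' := fun hx => hnd1 3 p3 h3n hx
      have h3B : 3 ∣ B := dvd_trans (by norm_num) h9B
      rcases (Nat.Prime.dvd_mul p3).mp h3B with hx | hx
      · rcases (Nat.Prime.dvd_mul p3).mp hx with hy | hy
        · norm_num at hy
        · exact h3d (p3.dvd_of_dvd_pow hy)
      · omega
    · by_cases h3d : 3 ∣ d'
      · have h3A : 3 ∣ A := dvd_trans (by norm_num) h9A
        rcases (Nat.Prime.dvd_mul p3).mp h3A with hx | hx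
        · exact h3n (p3.dvd_of_dvd_pow hx)
        · omega
      · have c1 : Nat.Coprime 3 n' := (Nat.Prime.coprime_iff_not_dvd p3).mpr h3n
        have c2 : Nat.Coprime 3 d' := (Nat.Prime.coprime_iff_not_dvd p3).mpr h3d
        have c9n : Nat.Coprime (3 ^ 2) (n' ^ 3) := Nat.Coprime.pow 2 3 c1
        have h9s : (9 : ℕ) ∣ n' + 4 * d' := by
          have := (Nat.Coprime.dvd_of_dvd_mul_left c9n (by rwa [hA] at h9A))
          simpa using this
        have c9B : Nat.Coprime (3 ^ 2) (16 * d' ^ 3) := by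
          have : Nat.Coprime (3 ^ 2) (d' ^ 3) := Nat.Coprime.pow 2 3 c2
          exact Nat.Coprime.mul_right (by decide) this
        have h9t : (9 : ℕ) ∣ n' + d' := by
          have := (Nat.Coprime.dvd_of_dvd_mul_left c9B (by rwa [hB] at h9B))
          simpa using this
        omega
  -- Fact 3 : other primes
  have f3 : ∀ p : ℕ, p.Prime → p ≠ 2 → p ≠ 3 → ¬ (p ∣ A ∧ p ∣ B) := by
    rintro p hp hp2 hp3 ⟨hpA, hpB⟩
    have hdvdn4 : p ∣ n' ∨ p ∣ n' + 4 * d' := by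
      rcases (hp.dvd_mul).mp hpA with hx | hx
      · exact Or.inl (hp.dvd_of_dvd_pow hx)
      · exact Or.inr hx
    have hdvdB : p ∣ d' ∨ p ∣ n' + d' := by
      rcases (hp.dvd_mul).mp hpB with hx | hx
      · rcases (hp.dvd_mul).mp hx with hy | hy
        · exact absurd ((Nat.prime_dvd_prime_iff_eq hp p2).mp
            (hp.dvd_of_dvd_pow (show p ∣ 2 ^ 4 by norm_num at hy ⊢; exact hy))) hp2
        · exact Or.inl (hp.dvd_of_dvd_pow hy)
      · exact Or.inr hx
    rcases hdvdn4 with hn4 | hn4 <;> rcases hdvdB with hdB | hdB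
    · exact hnd1 p hp hn4 hdB
    · have : p ∣ d' := by
        have := Nat.dvd_sub hdB hn4
        simpa using this
      exact hnd1 p hp hn4 this
    · have : p ∣ n' := by
        have h4d : p ∣ 4 * d' := Dvd.dvd.mul_left hdB 4
        have := Nat.dvd_sub hn4 h4d
        simpa using this
      exact hnd1 p hp this hdB
    · have h3d : p ∣ 3 * d' := by
        have := Nat.dvd_sub hn4 hdB
        have e : n' + 4 * d' - (n' + d') = 3 * d' := by omega
        rwa [e] at this
      rcases (hp.dvd_mul).mp h3d with hx | hx
      · exact hp3 ((Nat.prime_dvd_prime_iff_eq hp p3).mp hx)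
      · have : p ∣ n' := by
          have h1d : p ∣ 1 * d' := by simpa using hx
          have := Nat.dvd_sub hdB hx
          simpa using this
        exact hnd1 p hp this hx
  -- D divides 48
  have hdvd : Nat.gcd A B ∣ 48 := by
    rw [← Nat.factorization_le_iff_dvd hD0 (by norm_num), Nat.factorization_gcd hA0 hB0]
    rw [Finsupp.le_def]
    intro p
    rw [Finsupp.inf_apply]
    by_cases hp : p.Prime
    · by_cases hq2 : p = 2
      · subst hq2
        have h48 : 4 ≤ (Nat.factorization 48) 2 := by
          rw [← Nat.Prime.pow_dvd_iff_le_factorization p2 (by norm_num)]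
          norm_num
        rcases f1 with hx | hx
        · have : (Nat.factorization A) 2 = 0 := Nat.factorization_eq_zero_of_not_dvd hx
          simp [this]
        · have : (Nat.factorization B) 2 ≤ 4 := by
            by_contra hcc
            push_neg at hcc
            exact hx ((Nat.Prime.pow_dvd_iff_le_factorization p2 hB0).mpr hcc)
          exact le_trans (le_trans (min_le_right _ _) this) h48
      · by_cases hq3 : p = 3
        · subst hq3
          have h48 : 1 ≤ (Nat.factorization 48) 3 := by
            rw [← Nat.Prime.pow_dvd_iff_le_factorization p3 (by norm_num)]
            norm_num
          rcases f2 with hx | hx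
          · have : (Nat.factorization A) 3 ≤ 1 := by
              by_contra hcc
              push_neg at hcc
              exact hx ((Nat.Prime.pow_dvd_iff_le_factorization p3 hA0).mpr hcc)
            exact le_trans (le_trans (min_le_left _ _) this) h48
          · have : (Nat.factorization B) 3 ≤ 1 := by
              by_contra hcc
              push_neg at hcc
              exact hx ((Nat.Prime.pow_dvd_iff_le_factorization p3 hB0).mpr hcc)
            exact le_trans (le_trans (min_le_right _ _) this) h48
        · have := f3 p hp hq2 hq3
          by_cases hpA : p ∣ A
          · have hpB : ¬ p ∣ B := fun hx => this ⟨hpA, hx⟩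
            have : (Nat.factorization B) p = 0 := Nat.factorization_eq_zero_of_not_dvd hpB
            simp [this]
          · have : (Nat.factorization A) p = 0 := Nat.factorization_eq_zero_of_not_dvd hpA
            simp [this]
    · simp [Nat.factorization_eq_zero_of_not_prime _ hp]
  -- enumerate divisors of 48
  have key2 : ∀ D < 49, D ∣ 48 → ∃ e2 < 5, ∃ e3 < 2, D = 2 ^ e2 * 3 ^ e3 := by decide
  have hle : Nat.gcd A B < 49 := by
    have := Nat.le_of_dvd (by norm_num) hdvd
    omega
  obtain ⟨e2, he2, e3, he3, hEq⟩ := key2 _ hle hdvd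
  exact ⟨e2, e3, by omega, by omega, hEq, hdvd⟩
end

section
/- Let $0 < \alpha \le 1/2$ and let $y \ge 3$ and $w$ be real numbers with $2 \le w \le y^{\alpha/4}$. Suppose $n$ is a positive integer that has a divisor $d$ with $d > y^{\alpha}$ and $d$ being $w$-smooth. Then there exist a prime $p \le w$ and positive integers $a, b$ such that $n = a \cdot p \cdot b$, $y^{\alpha/2} < a \le y^{\alpha}/p$, every prime factor of $a$ is at most $p$, and every prime factor of $b$ is at least $p$. -/
private lemma list_coprime_prod {d : ℕ} : ∀ l : List ℕ, (∀ x ∈ l, Nat.Coprime d x) →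
    Nat.Coprime d l.prod := by
  intro l
  induction l with
  | nil => intro _; simp [Nat.coprime_one_right]
  | cons a t ih =>
    intro h
    rw [List.prod_cons]
    exact Nat.Coprime.mul_right (h a (by simp)) (ih fun x hx => h x (by simp [hx]))

private lemma dropWhile_gt (W : ℕ) : ∀ l : List ℕ, l.Pairwise (· ≤ ·) →
    ∀ x ∈ l.dropWhile (fun q => q ≤ W), W < x := by
  intro l
  induction l with
  | nil => simp
  | cons a t ih =>
    intro hs x hx
    rw [List.pairwise_cons] at hs
    by_cases ha : a ≤ W
    · rw [List.dropWhile_cons_of_pos (by simpa using ha)] at hx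
      exact ih hs.2 x hx
    · rw [List.dropWhile_cons_of_neg (by simpa using ha)] at hx
      rcases List.mem_cons.mp hx with rfl | hx
      · omega
      · have := hs.1 x hx; omega

private lemma prod_take_mono {l : List ℕ} (hl : ∀ x ∈ l, 0 < x) {i j : ℕ} (hij : i ≤ j) :
    (l.take i).prod ≤ (l.take j).prod := by
  have h : l.take j = l.take i ++ (l.drop i).take (j - i) := by
    rw [← List.take_add]; congr 1; omega
  have hpos : 0 < ((l.drop i).take (j - i)).prod := by
    apply List.prod_pos
    intro x hx
    exact hl x (List.mem_of_mem_drop (List.mem_of_mem_take hx))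
  rw [h, List.prod_append]
  exact Nat.le_mul_of_pos_right _ hpos

theorem stmt11 (α y w : ℝ) (hα0 : 0 < α) (hα : α ≤ 1 / 2) (hy : 3 ≤ y)
    (hw2 : 2 ≤ w) (hw : w ≤ y ^ (α / 4)) (n : ℕ) (hn : 0 < n)
    (hd : ∃ d : ℕ, d ∣ n ∧ y ^ α < (d : ℝ) ∧
      ∀ p : ℕ, p.Prime → p ∣ d → (p : ℝ) ≤ w) :
    ∃ p a b : ℕ, p.Prime ∧ (p : ℝ) ≤ w ∧ 0 < a ∧ 0 < b ∧ n = a * p * b ∧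
      y ^ (α / 2) < (a : ℝ) ∧ (a : ℝ) ≤ y ^ α / (p : ℝ) ∧
      (∀ q : ℕ, q.Prime → q ∣ a → q ≤ p) ∧
      (∀ q : ℕ, q.Prime → q ∣ b → p ≤ q) := by
  obtain ⟨d, hdn, hdgt, hdsm⟩ := hd
  set W : ℕ := ⌊w⌋₊ with hW
  have hy1 : (1 : ℝ) ≤ y := by linarith
  have hy0 : (0 : ℝ) < y := by linarith
  have hw0 : (0 : ℝ) ≤ w := by linarith
  have hWw : (W : ℝ) ≤ w := Nat.floor_le hw0
  -- basic rpow facts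
  have h1le : (1 : ℝ) ≤ y ^ (α / 2) := by
    calc (1:ℝ) = y ^ (0:ℝ) := (Real.rpow_zero y).symm
    _ ≤ y ^ (α / 2) := Real.rpow_le_rpow_of_exponent_le hy1 (by linarith)
  have hhalf_le : y ^ (α / 2) ≤ y ^ α := Real.rpow_le_rpow_of_exponent_le hy1 (by linarith)
  have h34 : y ^ (α / 2) * y ^ (α / 4) = y ^ (3 * α / 4) := by
    rw [← Real.rpow_add hy0]; ring_nf
  have h34full : y ^ (3 * α / 4) * y ^ (α / 4) = y ^ α := by
    rw [← Real.rpow_add hy0]; ring_nf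
  have h34lt : y ^ (3 * α / 4) < y ^ α := by
    apply Real.rpow_lt_rpow_of_exponent_lt (by linarith) (by linarith)
  set L : List ℕ := n.primeFactorsList with hL
  have hLs : L.Pairwise (· ≤ ·) := (Nat.primeFactorsList_sorted n).pairwise
  have hLprod : L.prod = n := Nat.prod_primeFactorsList hn.ne'
  have hLprime : ∀ x ∈ L, Nat.Prime x := fun x hx => Nat.prime_of_mem_primeFactorsList hx
  have hLpos : ∀ x ∈ L, 0 < x := fun x hx => (hLprime x hx).pos
  set L₁ : List ℕ := L.takeWhile (fun q => q ≤ W) with hL₁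
  set L₂ : List ℕ := L.dropWhile (fun q => q ≤ W) with hL₂
  have happ : L₁ ++ L₂ = L := List.takeWhile_append_dropWhile
  -- d divides L₁.prod
  have hd0 : 0 < d := by
    by_contra h
    push_neg at h
    interval_cases d
    simp at hdgt
    have : (0:ℝ) < y ^ α := Real.rpow_pos_of_pos hy0 α
    linarith
  have hdL₁ : d ∣ L₁.prod := by
    have hcop : Nat.Coprime d L₂.prod := by
      apply list_coprime_prod
      intro x hx
      have hxp : x.Prime := hLprime x (happ ▸ List.mem_append_right L₁ hx)
      have hxW : W < x := dropWhile_gt W L hLs x hx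
      rw [Nat.coprime_comm]
      apply (Nat.Prime.coprime_iff_not_dvd hxp).mpr
      intro hxd
      have := hdsm x hxp hxd
      have : x ≤ W := Nat.le_floor this
      omega
    have : d ∣ L₁.prod * L₂.prod := by
      rw [← List.prod_append, happ, hLprod]; exact hdn
    exact Nat.Coprime.dvd_of_dvd_mul_right hcop this
  have hL₁pos : 0 < L₁.prod := List.prod_pos fun x hx => hLpos x (happ ▸ List.mem_append_left L₂ hx)
  have hL₁gt : y ^ α < (L₁.prod : ℝ) := by
    calc y ^ α < (d : ℝ) := hdgt
    _ ≤ (L₁.prod : ℝ) := by exact_mod_cast Nat.le_of_dvd hL₁pos hdL₁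
  -- the prefix products
  have hL₁len : L₁.length ≤ L.length := by
    conv_rhs => rw [← happ]
    simp
  have hL₁take : L.take L₁.length = L₁ := by
    conv_lhs => rw [← happ]
    simp
  have hex : ∃ j, y ^ (α / 2) < ((L.take j).prod : ℝ) := by
    refine ⟨L₁.length, ?_⟩
    rw [hL₁take]
    linarith
  set j : ℕ := Nat.find hex with hj
  have hjspec : y ^ (α / 2) < ((L.take j).prod : ℝ) := Nat.find_spec hex
  have hj1 : 1 ≤ j := by
    rw [Nat.one_le_iff_ne_zero]
    intro h0
    rw [h0] at hjspec
    simp only [List.take_zero, List.prod_nil, Nat.cast_one] at hjspec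
    linarith
  have hjprev : ((L.take (j - 1)).prod : ℝ) ≤ y ^ (α / 2) := by
    have := Nat.find_min hex (m := j - 1) (by omega)
    push_neg at this
    exact this
  -- j ≤ L₁.length
  have hjle : j ≤ L₁.length := by
    by_contra h
    push_neg at h
    have : L₁.prod ≤ (L.take (j - 1)).prod := by
      rw [← hL₁take]
      exact prod_take_mono hLpos (by omega)
    have : (L₁.prod : ℝ) ≤ ((L.take (j-1)).prod : ℝ) := by exact_mod_cast this
    linarith
  have hjm1lt : j - 1 < L₁.length := by omega
  have hjm1ltL : j - 1 < L.length := by omega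
  -- the element at index j-1 is ≤ W
  have hmemW : ∀ i (hi : i < L₁.length), L[i]'(by omega) ≤ W := by
    intro i hi
    have h1 : L[i]'(by omega) = L₁[i]'hi := by
      rw [List.getElem_of_eq happ.symm (by omega)]
      exact List.getElem_append_left hi
    have h2 := List.mem_takeWhile_imp (List.getElem_mem (l := L₁) (n := i) hi)
    simp only [decide_eq_true_eq] at h2
    omega
  have hjeq : (L.take j).prod = (L.take (j-1)).prod * (L[j-1]'hjm1ltL) := by
    have h' := List.prod_take_succ L (j-1) hjm1ltL
    have he : j - 1 + 1 = j := by omega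
    rw [he] at h'
    exact h'
  have haub : ((L.take j).prod : ℝ) ≤ y ^ (3 * α / 4) := by
    rw [hjeq, Nat.cast_mul]
    calc ((L.take (j-1)).prod : ℝ) * (L[j-1]'hjm1ltL : ℕ) ≤ y ^ (α/2) * w := by
          apply mul_le_mul hjprev _ (by positivity) (by positivity)
          calc ((L[j-1]'hjm1ltL : ℕ) : ℝ) ≤ (W : ℝ) := by exact_mod_cast hmemW (j-1) hjm1lt
          _ ≤ w := hWw
    _ ≤ y ^ (α/2) * y ^ (α/4) := by
          apply mul_le_mul_of_nonneg_left hw (by positivity)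
    _ = y ^ (3 * α / 4) := h34
  -- j < L₁.length
  have hjlt : j < L₁.length := by
    rcases lt_or_eq_of_le hjle with h | h
    · exact h
    · exfalso
      rw [h, hL₁take] at haub
      linarith
  have hjltL : j < L.length := by omega
  set p : ℕ := L[j]'hjltL with hp
  set a : ℕ := (L.take j).prod with ha
  set b : ℕ := (L.drop (j+1)).prod with hb
  have hpmem : p ∈ L := List.getElem_mem hjltL
  have hpprime : p.Prime := hLprime p hpmem
  have hpW : p ≤ W := hmemW j hjlt
  have hpw : (p : ℝ) ≤ w := le_trans (by exact_mod_cast hpW) hWw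
  have hapos : 0 < a := List.prod_pos fun x hx => hLpos x (List.mem_of_mem_take hx)
  have hbpos : 0 < b := List.prod_pos fun x hx => hLpos x (List.mem_of_mem_drop hx)
  have hdropj : L.drop j = p :: L.drop (j+1) := List.drop_eq_getElem_cons hjltL
  have hnab : n = a * p * b := by
    have : L.prod = (L.take j).prod * (L.drop j).prod := by
      rw [← List.prod_append, List.take_append_drop]
    rw [← hLprod, this, hdropj, List.prod_cons]
    ring
  -- a ≤ y^α / p
  have hap : (a : ℝ) * p ≤ y ^ α := by
    calc (a : ℝ) * p ≤ y ^ (3*α/4) * w := by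
          apply mul_le_mul haub hpw (by positivity) (by positivity)
    _ ≤ y ^ (3*α/4) * y ^ (α/4) := by
          apply mul_le_mul_of_nonneg_left hw (by positivity)
    _ = y ^ α := h34full
  have hadiv : (a : ℝ) ≤ y ^ α / (p : ℝ) := by
    rw [le_div_iff₀ (by exact_mod_cast hpprime.pos)]
    exact hap
  -- prime facts
  have hsplit : ∀ x ∈ L.take j, x ≤ p := by
    intro x hx
    have hpair : List.Pairwise (· ≤ ·) (L.take j ++ L.drop j) := by
      rw [List.take_append_drop]; exact hLs
    have := (List.pairwise_append.mp hpair).2.2 x hx p (by rw [hdropj]; simp)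
    exact this
  have hsplit2 : ∀ x ∈ L.drop (j+1), p ≤ x := by
    intro x hx
    have hsd : List.Pairwise (· ≤ ·) (L.drop j) := hLs.sublist (List.drop_sublist j L)
    rw [hdropj, List.pairwise_cons] at hsd
    exact hsd.1 x hx
  refine ⟨p, a, b, hpprime, hpw, hapos, hbpos, hnab, hjspec, hadiv, ?_, ?_⟩
  · intro q hq hqa
    obtain ⟨r, hr, hqr⟩ := (Prime.dvd_prod_iff hq.prime).mp hqa
    have hrp : r.Prime := hLprime r (List.mem_of_mem_take hr)
    have : q = r := (Nat.prime_dvd_prime_iff_eq hq hrp).mp hqr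
    subst this
    exact hsplit q hr
  · intro q hq hqb
    obtain ⟨r, hr, hqr⟩ := (Prime.dvd_prod_iff hq.prime).mp hqb
    have hrp : r.Prime := hLprime r (List.mem_of_mem_drop hr)
    have : q = r := (Nat.prime_dvd_prime_iff_eq hq hrp).mp hqr
    subst this
    exact hsplit2 q hr
end

section
/- There exists an absolute constant $C > 0$ such that the following holds. Let $\alpha \in (0, 1]$ and let $y \ge 3$ and $w \ge 2$ be real numbers with $\log w \le \alpha \log y$. Then $\sum_{100 < p \le w} \frac{1}{p} \exp\left( - \alpha \frac{\log y}{\log p} \right) \le C \exp\left( - \alpha \frac{\log y}{\log w} \right)$, where the sum is over primes $p$ with $100 < p \le w$. -/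
open scoped Classical
open Finset

-- Chebyshev-style: number of primes p with Nat.log 2 p = j is at most 2^(j+2)/j
lemma block_count (j : ℕ) :
    (((Finset.range (2 ^ (j + 1))).filter
      (fun p : ℕ => p.Prime ∧ Nat.log 2 p = j)).card) * j ≤ 2 ^ (j + 2) := by
  set s := (Finset.range (2 ^ (j + 1))).filter (fun p : ℕ => p.Prime ∧ Nat.log 2 p = j) with hs
  have h1 : (2 ^ j) ^ s.card ≤ ∏ p ∈ s, p := by
    apply Finset.pow_card_le_prod
    intro p hp
    simp only [hs, Finset.mem_filter, Finset.mem_range] at hp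
    have := Nat.pow_log_le_self 2 hp.2.1.pos.ne'
    rwa [hp.2.2] at this
  have h2 : ∏ p ∈ s, p ≤ primorial (2 ^ (j + 1) - 1) := by
    unfold primorial
    apply Finset.prod_le_prod_of_subset_of_one_le'
    · intro p hp
      simp only [hs, Finset.mem_filter, Finset.mem_range] at hp ⊢
      have h2j : (1:ℕ) ≤ 2 ^ (j+1) := Nat.one_le_two_pow
      exact ⟨by omega, hp.2.1⟩
    · intro p hp _
      exact (Finset.mem_filter.1 hp).2.one_lt.le
  have h3 : primorial (2 ^ (j + 1) - 1) ≤ 2 ^ (2 ^ (j + 2)) := by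
    calc primorial (2 ^ (j + 1) - 1) ≤ 4 ^ (2 ^ (j + 1) - 1) := primorial_le_4_pow _
      _ ≤ 4 ^ (2 ^ (j + 1)) := Nat.pow_le_pow_right (by norm_num) (Nat.sub_le _ _)
      _ = 2 ^ (2 ^ (j + 2)) := by
          rw [show (4:ℕ) = 2 ^ 2 by norm_num, ← pow_mul, pow_succ]
          ring_nf
  have h4 : (2:ℕ) ^ (j * s.card) ≤ 2 ^ (2 ^ (j + 2)) := by
    rw [pow_mul]; exact le_trans h1 (le_trans h2 h3)
  have := (Nat.pow_le_pow_iff_right (by norm_num : 1 < 2)).1 h4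
  rw [Nat.mul_comm]; exact this

lemma exp_neg_le_one_div {x : ℝ} (hx : 0 < x) : Real.exp (-x) ≤ 1 / x := by
  have h1 : x ≤ Real.exp x := by linarith [Real.add_one_le_exp x]
  calc Real.exp (-x) = (Real.exp x)⁻¹ := Real.exp_neg x
    _ ≤ x⁻¹ := by gcongr
    _ = 1 / x := (one_div x).symm

theorem stmt13 :
    ∃ C : ℝ, 0 < C ∧ ∀ α y w : ℝ, 0 < α → α ≤ 1 → 3 ≤ y → 2 ≤ w →
      Real.log w ≤ α * Real.log y →
      ∑ p ∈ (Finset.range (⌊w⌋₊ + 1)).filter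
          (fun p : ℕ => p.Prime ∧ 100 < p ∧ (p : ℝ) ≤ w),
        ((1 : ℝ) / (p : ℝ)) * Real.exp (-α * Real.log y / Real.log p)
      ≤ C * Real.exp (-α * Real.log y / Real.log w) := by
  refine ⟨100, by norm_num, ?_⟩
  intro α y w hα hα1 hy hw hlog
  set s := (Finset.range (⌊w⌋₊ + 1)).filter
      (fun p : ℕ => p.Prime ∧ 100 < p ∧ (p : ℝ) ≤ w) with hsdef
  set B := Real.log w with hBdef
  set L := α * Real.log y with hLdef
  have hB0 : 0 < B := Real.log_pos (by linarith)
  have hLB : B ≤ L := hlog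
  have hL0 : 0 < L := lt_of_lt_of_le hB0 hLB
  have hl2 : 0 < Real.log 2 := Real.log_pos (by norm_num)
  -- facts about members of s
  have hmem : ∀ p ∈ s, p.Prime ∧ 100 < p ∧ (p : ℝ) ≤ w := by
    intro p hp
    exact (Finset.mem_filter.1 hp).2
  -- Step A : pointwise reduction
  have stepA : ∀ p ∈ s,
      ((1 : ℝ) / (p : ℝ)) * Real.exp (-α * Real.log y / Real.log p)
      ≤ (Real.exp 1 * Real.exp (-(L / B))) * (((1 : ℝ) / (p : ℝ)) * Real.exp (-(B / Real.log p))) := by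
    intro p hp
    obtain ⟨hprime, h100, hpw⟩ := hmem p hp
    have hp1 : (1 : ℝ) < (p : ℝ) := by exact_mod_cast lt_trans (by norm_num : 1 < 100) h100
    have ha : 0 < Real.log p := Real.log_pos hp1
    have haB : Real.log p ≤ B := Real.log_le_log (by linarith) hpw
    set a := Real.log p
    have key : -L / a ≤ 1 - L / B - B / a := by
      have h : 1 - L / B - B / a - (-L / a) = ((L - B) * (B - a)) / (a * B) := by
        field_simp
        ring
      have h2 : 0 ≤ ((L - B) * (B - a)) / (a * B) :=
        div_nonneg (mul_nonneg (by linarith) (by linarith)) (mul_pos ha hB0).le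
      linarith [h ▸ h2]
    have heq : -α * Real.log y / a = -L / a := by rw [hLdef, neg_mul]
    rw [heq]
    have hexp : Real.exp (-L / a) ≤ Real.exp 1 * Real.exp (-(L / B)) * Real.exp (-(B / a)) := by
      rw [← Real.exp_add, ← Real.exp_add]
      apply Real.exp_le_exp.2
      have : 1 + -(L / B) + -(B / a) = 1 - L / B - B / a := by ring
      rw [this]
      exact key
    have hppos : (0 : ℝ) < (p : ℝ) := by positivity
    calc ((1 : ℝ) / (p : ℝ)) * Real.exp (-L / a)
        ≤ ((1 : ℝ) / (p : ℝ)) * (Real.exp 1 * Real.exp (-(L / B)) * Real.exp (-(B / a))) := by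
          apply mul_le_mul_of_nonneg_left hexp (by positivity)
      _ = (Real.exp 1 * Real.exp (-(L / B))) * (((1 : ℝ) / (p : ℝ)) * Real.exp (-(B / a))) := by
          ring
  -- Step B: the simplified sum is at most 16
  have stepB : ∑ p ∈ s, ((1 : ℝ) / (p : ℝ)) * Real.exp (-(B / Real.log p)) ≤ 16 := by
    set M := Nat.log 2 ⌊w⌋₊ with hM
    have hfl : 2 ≤ ⌊w⌋₊ := Nat.le_floor (by exact_mod_cast hw)
    have hmap : ∀ p ∈ s, Nat.log 2 p ∈ Finset.range (M + 1) := by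
      intro p hp
      have hpr : p < ⌊w⌋₊ + 1 := Finset.mem_range.1 (Finset.mem_filter.1 hp).1
      exact Finset.mem_range.2 (Nat.lt_succ_of_le (Nat.log_mono_right (by omega)))
    rw [← Finset.sum_fiberwise_of_maps_to hmap]
    have hinner : ∀ j ∈ Finset.range (M + 1),
        ∑ p ∈ s.filter (fun p => Nat.log 2 p = j),
          ((1 : ℝ) / (p : ℝ)) * Real.exp (-(B / Real.log p))
        ≤ 8 * Real.log 2 / B := by
      intro j _
      by_cases hj : 1 ≤ j
      · set t := s.filter (fun p => Nat.log 2 p = j) with ht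
        have hsub : t ⊆ (Finset.range (2 ^ (j + 1))).filter
            (fun p : ℕ => p.Prime ∧ Nat.log 2 p = j) := by
          intro p hp
          rw [ht, Finset.mem_filter] at hp
          obtain ⟨hps, hlogp⟩ := hp
          obtain ⟨hprime, h100, hpw⟩ := hmem p hps
          rw [Finset.mem_filter]
          refine ⟨Finset.mem_range.2 ?_, hprime, hlogp⟩
          have := Nat.lt_pow_succ_log_self (by norm_num : 1 < 2) p
          rwa [hlogp] at this
        have hcardj : t.card * j ≤ 2 ^ (j + 2) :=
          le_trans (Nat.mul_le_mul_right j (Finset.card_le_card hsub)) (block_count j)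
        have hkey : t.card * (j + 1) ≤ 8 * 2 ^ j := by
          have h1 : t.card * (j + 1) ≤ 2 * (t.card * j) := by nlinarith
          have h2 : 2 * 2 ^ (j + 2) = 8 * 2 ^ j := by ring
          omega
        have hkeyR : (t.card : ℝ) * ((j : ℝ) + 1) ≤ 8 * 2 ^ j := by exact_mod_cast hkey
        have hptw : ∀ p ∈ t,
            ((1 : ℝ) / (p : ℝ)) * Real.exp (-(B / Real.log p))
            ≤ ((2 : ℝ) ^ j)⁻¹ * Real.exp (-(B / (((j : ℝ) + 1) * Real.log 2))) := by
          intro p hp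
          rw [ht, Finset.mem_filter] at hp
          obtain ⟨hps, hlogp⟩ := hp
          obtain ⟨hprime, h100, hpw⟩ := hmem p hps
          have hp2j : (2 : ℕ) ^ j ≤ p := by
            have := Nat.pow_log_le_self 2 hprime.pos.ne'
            rwa [hlogp] at this
          have hp2jR : ((2 : ℝ) ^ j) ≤ (p : ℝ) := by exact_mod_cast hp2j
          have hplt : p < 2 ^ (j + 1) := by
            have := Nat.lt_pow_succ_log_self (by norm_num : 1 < 2) p
            rwa [hlogp] at this
          have hpltR : (p : ℝ) ≤ (2 : ℝ) ^ (j + 1) := by exact_mod_cast hplt.le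
          have hp1 : (1 : ℝ) < (p : ℝ) := by exact_mod_cast (by omega : 1 < p)
          have hlogp0 : 0 < Real.log p := Real.log_pos hp1
          have hloglt : Real.log p ≤ ((j : ℝ) + 1) * Real.log 2 := by
            have := Real.log_le_log (by linarith) hpltR
            rwa [Real.log_pow, Nat.cast_add, Nat.cast_one] at this
          have he : Real.exp (-(B / Real.log p))
              ≤ Real.exp (-(B / (((j : ℝ) + 1) * Real.log 2))) := by
            apply Real.exp_le_exp.2
            apply neg_le_neg
            apply div_le_div_of_nonneg_left hB0.le hlogp0 hloglt
          have h1p : (1 : ℝ) / (p : ℝ) ≤ ((2 : ℝ) ^ j)⁻¹ := by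
            rw [one_div]
            exact inv_anti₀ (by positivity) hp2jR
          have h0 : (0 : ℝ) ≤ Real.exp (-(B / Real.log p)) := (Real.exp_pos _).le
          calc ((1 : ℝ) / (p : ℝ)) * Real.exp (-(B / Real.log p))
              ≤ ((2 : ℝ) ^ j)⁻¹ * Real.exp (-(B / Real.log p)) :=
                mul_le_mul_of_nonneg_right h1p h0
            _ ≤ ((2 : ℝ) ^ j)⁻¹ * Real.exp (-(B / (((j : ℝ) + 1) * Real.log 2))) :=
                mul_le_mul_of_nonneg_left he (by positivity)
        have hsum1 : ∑ p ∈ t, ((1 : ℝ) / (p : ℝ)) * Real.exp (-(B / Real.log p))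
            ≤ (t.card : ℝ) * (((2 : ℝ) ^ j)⁻¹ * Real.exp (-(B / (((j : ℝ) + 1) * Real.log 2)))) := by
          have := Finset.sum_le_card_nsmul t _ _ hptw
          rwa [nsmul_eq_mul] at this
        refine le_trans hsum1 ?_
        have hjl2 : (0 : ℝ) < ((j : ℝ) + 1) * Real.log 2 := by positivity
        have hexp2 : Real.exp (-(B / (((j : ℝ) + 1) * Real.log 2)))
            ≤ (((j : ℝ) + 1) * Real.log 2) / B := by
          calc Real.exp (-(B / (((j : ℝ) + 1) * Real.log 2)))
              ≤ 1 / (B / (((j : ℝ) + 1) * Real.log 2)) := exp_neg_le_one_div (by positivity)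
            _ = (((j : ℝ) + 1) * Real.log 2) / B := by rw [one_div_div]
        have h2j0 : (0 : ℝ) < (2 : ℝ) ^ j := by positivity
        calc (t.card : ℝ) * (((2 : ℝ) ^ j)⁻¹ * Real.exp (-(B / (((j : ℝ) + 1) * Real.log 2))))
            ≤ (t.card : ℝ) * (((2 : ℝ) ^ j)⁻¹ * ((((j : ℝ) + 1) * Real.log 2) / B)) := by
              apply mul_le_mul_of_nonneg_left _ (by positivity)
              exact mul_le_mul_of_nonneg_left hexp2 (by positivity)
          _ = ((t.card : ℝ) * ((j : ℝ) + 1)) * Real.log 2 / ((2 : ℝ) ^ j * B) := by ring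
          _ ≤ (8 * (2 : ℝ) ^ j) * Real.log 2 / ((2 : ℝ) ^ j * B) := by
              apply div_le_div_of_nonneg_right _ (by positivity)
              exact mul_le_mul_of_nonneg_right hkeyR hl2.le
          _ = 8 * Real.log 2 / B := by
              field_simp
      · have hempty : s.filter (fun p => Nat.log 2 p = j) = ∅ := by
          apply Finset.filter_eq_empty_iff.2
          intro p hp
          obtain ⟨hprime, h100, _⟩ := hmem p hp
          have : 0 < Nat.log 2 p := Nat.log_pos (by norm_num) (by omega)
          omega
        rw [hempty, Finset.sum_empty]
        positivity
    calc ∑ j ∈ Finset.range (M + 1), ∑ p ∈ s.filter (fun p => Nat.log 2 p = j),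
          ((1 : ℝ) / (p : ℝ)) * Real.exp (-(B / Real.log p))
        ≤ ∑ j ∈ Finset.range (M + 1), 8 * Real.log 2 / B := Finset.sum_le_sum hinner
      _ = ((M : ℝ) + 1) * (8 * Real.log 2 / B) := by
          rw [Finset.sum_const, Finset.card_range, nsmul_eq_mul]
          push_cast
          ring
      _ ≤ 16 := by
          have hMl : (M : ℝ) * Real.log 2 ≤ B := by
            have h2M : ((2 : ℝ)) ^ M ≤ w := by
              have hn : (2 : ℕ) ^ M ≤ ⌊w⌋₊ := Nat.pow_log_le_self 2 (by omega)
              calc ((2 : ℝ)) ^ M = (((2 : ℕ) ^ M : ℕ) : ℝ) := by push_cast; ring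
                _ ≤ (⌊w⌋₊ : ℝ) := by exact_mod_cast hn
                _ ≤ w := Nat.floor_le (by linarith)
            have := Real.log_le_log (by positivity) h2M
            rwa [Real.log_pow] at this
          have hl2B : Real.log 2 ≤ B := Real.log_le_log (by norm_num) hw
          rw [show ((M : ℝ) + 1) * (8 * Real.log 2 / B)
              = 8 * (((M : ℝ) + 1) * Real.log 2) / B by ring, div_le_iff₀ hB0]
          nlinarith
  -- Step C: combine
  calc ∑ p ∈ s, ((1 : ℝ) / (p : ℝ)) * Real.exp (-α * Real.log y / Real.log p)
      ≤ ∑ p ∈ s, (Real.exp 1 * Real.exp (-(L / B))) *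
          (((1 : ℝ) / (p : ℝ)) * Real.exp (-(B / Real.log p))) := Finset.sum_le_sum stepA
    _ = (Real.exp 1 * Real.exp (-(L / B))) *
          ∑ p ∈ s, ((1 : ℝ) / (p : ℝ)) * Real.exp (-(B / Real.log p)) := by
        rw [Finset.mul_sum]
    _ ≤ (Real.exp 1 * Real.exp (-(L / B))) * 16 := by
        apply mul_le_mul_of_nonneg_left stepB (by positivity)
    _ ≤ 100 * Real.exp (-α * Real.log y / Real.log w) := by
        have heq : -α * Real.log y / Real.log w = -(L / B) := by
          rw [hLdef, hBdef, neg_mul, neg_div]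
        rw [heq]
        have h9 := Real.exp_one_lt_d9
        nlinarith [Real.exp_pos (-(L / B))]
end
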